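/- arXiv:2309.09849 — 3 statements merged into one kernel-verified Lean document; each statement's English description precedes it below -/
import Mathlib

section
/- (Lemma 3.4) Let G=(V,E) be a finite graph, m1,m2≥1 integers, p,q≥2, h1,h2:V→(0,∞). Let W be the (finite-dimensional) real normed vector space of pairs (u,v) of functions V→ℝ with norm ‖(u,v)‖ = ‖u‖_{W^{m1,p}} + ‖v‖_{W^{m2,q}} (Sobolev norms with weights h1,h2), and let W* be its continuous dual. Define T:W→W* by ⟨T(u,v),(φ1,φ2)⟩ = B_{m1,p}(u,φ1) + ∫_V h1|u|^{p−2}u·φ1 dμ + B_{m2,q}(v,φ2) + ∫_V h2|v|^{q−2}v·φ2 dμ. Then T is a bijection from W onto W* whose inverse T^{−1}:W*→W is continuous. -/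
open Real

noncomputable section

variable {V : Type*}

/-- Integral on a finite graph: `∫_V u dμ = ∑_{x∈V} μ(x) u(x)`. -/
def intV [Fintype V] (μ u : V → ℝ) : ℝ := ∑ x, μ x * u x

/-- Graph Laplacian. -/
def glap [Fintype V] (w : V → V → ℝ) (μ : V → ℝ) (u : V → ℝ) (x : V) : ℝ :=
  (1 / μ x) * ∑ y, w x y * (u y - u x)

/-- The bilinear form Γ. -/
def ggam [Fintype V] (w : V → V → ℝ) (μ : V → ℝ) (u v : V → ℝ) (x : V) : ℝ :=
  (1 / (2 * μ x)) * ∑ y, w x y * (u y - u x) * (v y - v x)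

/-- Length of the gradient: `|∇u|(x) = √(Γ(u,u)(x))`. -/
def gnorm [Fintype V] (w : V → V → ℝ) (μ : V → ℝ) (u : V → ℝ) (x : V) : ℝ :=
  Real.sqrt (ggam w μ u u x)

/-- The length `|∇^m u|` of the m-th order gradient. -/
def gradm [Fintype V] (w : V → V → ℝ) (μ : V → ℝ) (m : ℕ) (u : V → ℝ) (x : V) : ℝ :=
  if m % 2 = 1 then gnorm w μ ((glap w μ)^[(m - 1) / 2] u) x
  else |((glap w μ)^[m / 2] u) x|

/-- The Sobolev norm `‖u‖_{W^{m,l}}` (with weight `h`). -/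
def wnorm [Fintype V] (w : V → V → ℝ) (μ h : V → ℝ) (m : ℕ) (l : ℝ) (u : V → ℝ) : ℝ :=
  (intV μ (fun x => gradm w μ m u x ^ l + h x * |u x| ^ l)) ^ (1 / l)

/-- min of a function over the (nonempty finite) vertex set. -/
def fmin [Fintype V] [Nonempty V] (f : V → ℝ) : ℝ :=
  Finset.univ.inf' Finset.univ_nonempty f

/-- max of a function over the (nonempty finite) vertex set. -/
def fmax [Fintype V] [Nonempty V] (f : V → ℝ) : ℝ :=
  Finset.univ.sup' Finset.univ_nonempty f

/-- The poly-Laplacian pairing `B_{m,p}(u,φ)`. -/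
def Bmp [Fintype V] (w : V → V → ℝ) (μ : V → ℝ) (m : ℕ) (p : ℝ) (u φ : V → ℝ) : ℝ :=
  if m % 2 = 1 then
    intV μ (fun x => gradm w μ m u x ^ (p - 2) *
      ggam w μ ((glap w μ)^[(m - 1) / 2] u) ((glap w μ)^[(m - 1) / 2] φ) x)
  else
    intV μ (fun x => gradm w μ m u x ^ (p - 2) *
      ((glap w μ)^[m / 2] u x) * ((glap w μ)^[m / 2] φ x))

end



section RealLemmas
variable {p : ℝ} (hp : 2 ≤ p)

lemma rpow_mul_self_aux (a : ℝ) (ha : 0 ≤ a) {c : ℝ} (hc : 0 < c + 1) :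
    a ^ c * a = a ^ (c + 1) := by
  rcases eq_or_lt_of_le ha with h | h
  · rw [← h, Real.zero_rpow hc.ne', mul_zero]
  · rw [Real.rpow_add h, Real.rpow_one]

include hp

lemma abs_rpow_mul_self_sq (a : ℝ) : |a| ^ (p - 2) * a * a = |a| ^ p := by
  have h1 : |a| ^ (p - 2) * |a| = |a| ^ (p - 1) := by
    have := rpow_mul_self_aux |a| (abs_nonneg a) (c := p - 2) (by linarith)
    simpa [show p - 2 + 1 = p - 1 by ring] using this
  have h2 : |a| ^ (p - 1) * |a| = |a| ^ p := by
    have := rpow_mul_self_aux |a| (abs_nonneg a) (c := p - 1) (by linarith)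
    simpa [show p - 1 + 1 = p by ring] using this
  calc |a| ^ (p - 2) * a * a = |a| ^ (p - 2) * (|a| * |a|) := by
        rw [abs_mul_abs_self]; ring
    _ = |a| ^ p := by rw [← mul_assoc, h1, h2]

lemma rpow_sub_two_mul (a : ℝ) (ha : 0 ≤ a) : a ^ (p - 2) * a = a ^ (p - 1) := by
  have := rpow_mul_self_aux a ha (c := p - 2) (by linarith)
  simpa [show p - 2 + 1 = p - 1 by ring] using this

lemma rpow_sub_one_mul (a : ℝ) (ha : 0 ≤ a) : a ^ (p - 1) * a = a ^ p := by
  have := rpow_mul_self_aux a ha (c := p - 1) (by linarith)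
  simpa [show p - 1 + 1 = p by ring] using this

omit hp

lemma sq_rpow_half (a c : ℝ) : (a ^ 2 : ℝ) ^ (c / 2) = |a| ^ c := by
  rw [← sq_abs, ← Real.rpow_natCast |a| 2, ← Real.rpow_mul (abs_nonneg a)]
  norm_num
  rw [show (2:ℝ) * (c / 2) = c by ring]

lemma sqrt_rpow' (s : ℝ) (hs : 0 ≤ s) (c : ℝ) : Real.sqrt s ^ c = s ^ (c / 2) := by
  rw [Real.sqrt_eq_rpow, ← Real.rpow_mul hs]
  rw [show 1 / (2:ℝ) * c = c / 2 by ring]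

include hp

lemma hasDerivAt_abs_rpow' (a b : ℝ) :
    HasDerivAt (fun t : ℝ => |a + t * b| ^ p) (p * |a| ^ (p - 2) * a * b) 0 := by
  have hfun : (fun t : ℝ => |a + t * b| ^ p) = fun t => ((a + t * b) ^ 2) ^ (p / 2) := by
    funext t; rw [sq_rpow_half]
  have hin : HasDerivAt (fun t : ℝ => a + t * b) b 0 := by
    simpa using ((hasDerivAt_id (0 : ℝ)).mul_const b).const_add a
  have hsq : HasDerivAt (fun t : ℝ => (a + t * b) ^ 2) (2 * a * b) 0 := by
    have e : (fun t : ℝ => (a + t * b) ^ 2) = fun t => (a + t * b) * (a + t * b) := by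
      funext t; ring
    rw [e]
    exact (hin.mul hin).congr_deriv (by ring)
  have hout : HasDerivAt (fun s : ℝ => s ^ (p / 2)) ((p / 2) * ((a + 0 * b) ^ 2) ^ (p / 2 - 1))
      ((a + 0 * b) ^ 2) := Real.hasDerivAt_rpow_const (Or.inr (by linarith))
  have := hout.comp 0 hsq
  rw [hfun]
  refine this.congr_deriv ?_
  symm
  have he : (p / 2 - 1) = (p - 2) / 2 := by ring
  rw [he]
  norm_num [sq_rpow_half]
  ring

lemma hasDerivAt_quad_rpow (c0 c1 c2 : ℝ) :
    HasDerivAt (fun t : ℝ => (c0 + 2 * c1 * t + c2 * t ^ 2) ^ (p / 2))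
      (p * c0 ^ ((p - 2) / 2) * c1) 0 := by
  have hin : HasDerivAt (fun t : ℝ => c0 + 2 * c1 * t + c2 * t ^ 2) (2 * c1) 0 := by
    have h1 : HasDerivAt (fun t : ℝ => c0 + 2 * c1 * t) (2 * c1) 0 := by
      simpa using ((hasDerivAt_id (0 : ℝ)).const_mul (2 * c1)).const_add c0
    have h2 : HasDerivAt (fun t : ℝ => c2 * t ^ 2) (0 : ℝ) 0 := by
      have := ((hasDerivAt_id (0 : ℝ)).pow 2).const_mul c2
      norm_num at this
      exact this
    exact (h1.add h2).congr_deriv (add_zero _)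
  have hout : HasDerivAt (fun s : ℝ => s ^ (p / 2))
      ((p / 2) * (c0 + 2 * c1 * 0 + c2 * 0 ^ 2) ^ (p / 2 - 1)) (c0 + 2 * c1 * 0 + c2 * 0 ^ 2) :=
    Real.hasDerivAt_rpow_const (Or.inr (by linarith))
  have := hout.comp 0 hin
  refine this.congr_deriv ?_
  symm
  have he : (p / 2 - 1) = (p - 2) / 2 := by ring
  norm_num [he]
  ring

lemma signed_rpow_strictMono {a b : ℝ} (hab : a < b) :
    |a| ^ (p - 2) * a < |b| ^ (p - 2) * b := by
  have key : ∀ t : ℝ, 0 ≤ t → |t| ^ (p - 2) * t = t ^ (p - 1) := fun t ht => by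
    rw [abs_of_nonneg ht]; exact rpow_sub_two_mul hp t ht
  have hpexp : (0:ℝ) < p - 1 := by linarith
  rcases le_or_gt 0 a with ha | ha
  · rw [key a ha, key b (le_trans ha hab.le)]
    exact Real.rpow_lt_rpow ha hab hpexp
  · rcases le_or_gt b 0 with hb | hb
    · have h1 : |a| ^ (p - 2) * a = -((-a) ^ (p - 1)) := by
        have := key (-a) (by linarith)
        rw [abs_neg] at this; nlinarith [this]
      have h2 : |b| ^ (p - 2) * b = -((-b) ^ (p - 1)) := by
        have := key (-b) (by linarith)
        rw [abs_neg] at this; nlinarith [this]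
      rw [h1, h2, neg_lt_neg_iff]
      exact Real.rpow_lt_rpow (by linarith) (by linarith) hpexp
    · have h1 : |a| ^ (p - 2) * a < 0 :=
        mul_neg_of_pos_of_neg (Real.rpow_pos_of_pos (abs_pos.mpr ha.ne) _) ha
      have h2 : 0 < |b| ^ (p - 2) * b :=
        mul_pos (Real.rpow_pos_of_pos (abs_pos.mpr hb.ne') _) hb
      linarith

lemma signed_rpow_mono_mul (a b : ℝ) :
    0 ≤ (|a| ^ (p - 2) * a - |b| ^ (p - 2) * b) * (a - b) := by
  rcases lt_trichotomy a b with h | h | h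
  · have := signed_rpow_strictMono hp h
    nlinarith
  · simp [h]
  · have := signed_rpow_strictMono hp h
    nlinarith

lemma signed_rpow_strict_mul {a b : ℝ} (hab : a ≠ b) :
    0 < (|a| ^ (p - 2) * a - |b| ^ (p - 2) * b) * (a - b) := by
  rcases lt_or_gt_of_ne hab with h | h
  · have := signed_rpow_strictMono hp h
    nlinarith
  · have := signed_rpow_strictMono hp h
    nlinarith

lemma rpow_pair_mono (A B : ℝ) (hA : 0 ≤ A) (hB : 0 ≤ B) :
    0 ≤ A ^ (p - 2) * (A * A) - A ^ (p - 2) * (A * B)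
      - B ^ (p - 2) * (A * B) + B ^ (p - 2) * (B * B) := by
  have e1 : A ^ (p - 2) * (A * A) = A ^ (p - 1) * A := by
    rw [← mul_assoc, rpow_sub_two_mul hp A hA]
  have e2 : A ^ (p - 2) * (A * B) = A ^ (p - 1) * B := by
    rw [← mul_assoc, rpow_sub_two_mul hp A hA]
  have e3 : B ^ (p - 2) * (A * B) = B ^ (p - 1) * A := by
    rw [mul_comm A B, ← mul_assoc, rpow_sub_two_mul hp B hB]
  have e4 : B ^ (p - 2) * (B * B) = B ^ (p - 1) * B := by
    rw [← mul_assoc, rpow_sub_two_mul hp B hB]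
  rw [e1, e2, e3, e4]
  have key : 0 ≤ (A ^ (p - 1) - B ^ (p - 1)) * (A - B) := by
    rcases le_total A B with h | h
    · have := Real.rpow_le_rpow hA h (by linarith : (0:ℝ) ≤ p - 1)
      nlinarith
    · have := Real.rpow_le_rpow hB h (by linarith : (0:ℝ) ≤ p - 1)
      nlinarith
  nlinarith

end RealLemmas

noncomputable section
variable {V : Type*} [Fintype V] (w : V → V → ℝ) (μ : V → ℝ)

lemma glap_add (u v : V → ℝ) : glap w μ (u + v) = glap w μ u + glap w μ v := by
  funext x
  simp only [glap, Pi.add_apply]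
  rw [← mul_add, ← Finset.sum_add_distrib]
  congr 1
  exact Finset.sum_congr rfl fun y _ => by ring

lemma glap_smul (c : ℝ) (u : V → ℝ) : glap w μ (c • u) = c • glap w μ u := by
  funext x
  simp only [glap, Pi.smul_apply, smul_eq_mul]
  rw [show ∑ y, w x y * (c * u y - c * u x) = c * ∑ y, w x y * (u y - u x) by
    rw [Finset.mul_sum]; exact Finset.sum_congr rfl fun y _ => by ring]
  ring

lemma iter_glap_add (k : ℕ) (u v : V → ℝ) :
    (glap w μ)^[k] (u + v) = (glap w μ)^[k] u + (glap w μ)^[k] v := by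
  induction k with
  | zero => simp
  | succ n ih => simp [Function.iterate_succ_apply', glap_add, ih]

lemma iter_glap_smul (k : ℕ) (c : ℝ) (u : V → ℝ) :
    (glap w μ)^[k] (c • u) = c • (glap w μ)^[k] u := by
  induction k with
  | zero => simp
  | succ n ih => simp [Function.iterate_succ_apply', glap_smul, ih]

lemma iter_glap_add_smul (k : ℕ) (t : ℝ) (u φ : V → ℝ) :
    (glap w μ)^[k] (u + t • φ) = (glap w μ)^[k] u + t • (glap w μ)^[k] φ := by
  rw [iter_glap_add, iter_glap_smul]

lemma iter_glap_sub (k : ℕ) (u v : V → ℝ) :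
    (glap w μ)^[k] (u - v) = (glap w μ)^[k] u - (glap w μ)^[k] v := by
  have h : u - v = u + (-1 : ℝ) • v := by funext z; simp; ring
  rw [h, iter_glap_add, iter_glap_smul]
  funext z; simp; ring

lemma ggam_expand (t : ℝ) (U Φ : V → ℝ) (x : V) :
    ggam w μ (U + t • Φ) (U + t • Φ) x
      = ggam w μ U U x + 2 * ggam w μ U Φ x * t + ggam w μ Φ Φ x * t ^ 2 := by
  simp only [ggam, Pi.add_apply, Pi.smul_apply, smul_eq_mul]
  rw [show ∑ y, w x y * (U y + t * Φ y - (U x + t * Φ x)) * (U y + t * Φ y - (U x + t * Φ x))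
      = ∑ y, (w x y * (U y - U x) * (U y - U x)
        + (2 * t) * (w x y * (U y - U x) * (Φ y - Φ x))
        + t ^ 2 * (w x y * (Φ y - Φ x) * (Φ y - Φ x)))
    from Finset.sum_congr rfl fun y _ => by ring]
  rw [Finset.sum_add_distrib, Finset.sum_add_distrib, ← Finset.mul_sum, ← Finset.mul_sum]
  ring

lemma ggam_add_right (u φ ψ : V → ℝ) (x : V) :
    ggam w μ u (φ + ψ) x = ggam w μ u φ x + ggam w μ u ψ x := by
  simp only [ggam, Pi.add_apply]
  rw [show ∑ y, w x y * (u y - u x) * (φ y + ψ y - (φ x + ψ x))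
      = ∑ y, (w x y * (u y - u x) * (φ y - φ x) + w x y * (u y - u x) * (ψ y - ψ x))
    from Finset.sum_congr rfl fun y _ => by ring]
  rw [Finset.sum_add_distrib]
  ring

lemma ggam_smul_right (u : V → ℝ) (c : ℝ) (φ : V → ℝ) (x : V) :
    ggam w μ u (c • φ) x = c * ggam w μ u φ x := by
  simp only [ggam, Pi.smul_apply, smul_eq_mul]
  rw [show ∑ y, w x y * (u y - u x) * (c * φ y - c * φ x)
      = c * ∑ y, w x y * (u y - u x) * (φ y - φ x) by
    rw [Finset.mul_sum]; exact Finset.sum_congr rfl fun y _ => by ring]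
  ring

lemma ggam_sub_right (u φ ψ : V → ℝ) (x : V) :
    ggam w μ u (φ - ψ) x = ggam w μ u φ x - ggam w μ u ψ x := by
  have h : φ - ψ = φ + (-1 : ℝ) • ψ := by funext z; simp; ring
  rw [h, ggam_add_right, ggam_smul_right]; ring

lemma ggam_comm (u v : V → ℝ) (x : V) : ggam w μ u v x = ggam w μ v u x := by
  simp only [ggam]
  congr 1
  exact Finset.sum_congr rfl fun y _ => by ring

variable (hw_nonneg : ∀ x y, 0 ≤ w x y) (hμ : ∀ x, 0 < μ x)
include hw_nonneg hμ

lemma ggam_self_nonneg (u : V → ℝ) (x : V) : 0 ≤ ggam w μ u u x := by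
  apply mul_nonneg
  · have := hμ x; positivity
  · exact Finset.sum_nonneg fun y _ => by nlinarith [hw_nonneg x y, sq_nonneg (u y - u x)]

lemma gnorm_mul_self (u : V → ℝ) (x : V) :
    gnorm w μ u x * gnorm w μ u x = ggam w μ u u x :=
  Real.mul_self_sqrt (ggam_self_nonneg w μ hw_nonneg hμ u x)

lemma ggam_cauchy_schwarz (u v : V → ℝ) (x : V) :
    |ggam w μ u v x| ≤ gnorm w μ u x * gnorm w μ v x := by
  have key : (ggam w μ u v x) ^ 2 ≤ ggam w μ u u x * ggam w μ v v x := by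
    have cs := Finset.sum_mul_sq_le_sq_mul_sq Finset.univ
      (fun y => Real.sqrt (w x y) * (u y - u x)) (fun y => Real.sqrt (w x y) * (v y - v x))
    have h1 : ∀ y, (Real.sqrt (w x y) * (u y - u x)) * (Real.sqrt (w x y) * (v y - v x))
        = w x y * (u y - u x) * (v y - v x) := fun y => by
      linear_combination (u y - u x) * (v y - v x) * Real.mul_self_sqrt (hw_nonneg x y)
    have h2 : ∀ (f : V → ℝ), ∀ y, (Real.sqrt (w x y) * f y) ^ 2 = w x y * f y * f y :=
      fun f y => by
        linear_combination f y * f y * Real.mul_self_sqrt (hw_nonneg x y)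
    rw [Finset.sum_congr rfl fun y _ => h1 y,
        Finset.sum_congr rfl fun y _ => h2 (fun z => u z - u x) y,
        Finset.sum_congr rfl fun y _ => h2 (fun z => v z - v x) y] at cs
    simp only [ggam]
    calc ((1 / (2 * μ x)) * ∑ y, w x y * (u y - u x) * (v y - v x)) ^ 2
        = (1 / (2 * μ x))^2 * (∑ y, w x y * (u y - u x) * (v y - v x))^2 := by ring
      _ ≤ (1 / (2 * μ x))^2 * ((∑ y, w x y * (u y - u x) * (u y - u x))
            * ∑ y, w x y * (v y - v x) * (v y - v x)) := by
          apply mul_le_mul_of_nonneg_left cs (sq_nonneg _)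
      _ = ((1 / (2 * μ x)) * ∑ y, w x y * (u y - u x) * (u y - u x))
            * ((1 / (2 * μ x)) * ∑ y, w x y * (v y - v x) * (v y - v x)) := by ring
  have h3 : |ggam w μ u v x| = Real.sqrt ((ggam w μ u v x) ^ 2) := (Real.sqrt_sq_eq_abs _).symm
  rw [h3, gnorm, gnorm, ← Real.sqrt_mul (ggam_self_nonneg w μ hw_nonneg hμ u x)]
  exact Real.sqrt_le_sqrt key

end

noncomputable section SectionC
open Real
variable {V : Type*} [Fintype V] (w : V → V → ℝ) (μ : V → ℝ) (h : V → ℝ) (m : ℕ) (p : ℝ)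

/-- The single-component pairing. -/
def pairS (u φ : V → ℝ) : ℝ :=
  Bmp w μ m p u φ + intV μ (fun x => h x * |u x| ^ (p - 2) * u x * φ x)

/-- The single-component functional. -/
def PhiS (u : V → ℝ) : ℝ :=
  (1 / p) * intV μ (fun x => gradm w μ m u x ^ p + h x * |u x| ^ p)

lemma gradm_nonneg (u : V → ℝ) (x : V) : 0 ≤ gradm w μ m u x := by
  unfold gradm
  split
  · exact Real.sqrt_nonneg _
  · exact abs_nonneg _

lemma Bmp_add_right (u φ ψ : V → ℝ) :
    Bmp w μ m p u (φ + ψ) = Bmp w μ m p u φ + Bmp w μ m p u ψ := by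
  unfold Bmp
  split
  · simp only [iter_glap_add w μ, ggam_add_right, mul_add, intV,
      Finset.sum_add_distrib]
  · simp only [iter_glap_add w μ, Pi.add_apply, mul_add, intV, Finset.sum_add_distrib]

lemma Bmp_smul_right (u : V → ℝ) (c : ℝ) (φ : V → ℝ) :
    Bmp w μ m p u (c • φ) = c * Bmp w μ m p u φ := by
  unfold Bmp
  split
  · simp only [iter_glap_smul w μ, ggam_smul_right, intV, Finset.mul_sum]
    exact Finset.sum_congr rfl fun x _ => by ring
  · simp only [iter_glap_smul w μ, Pi.smul_apply, smul_eq_mul, intV, Finset.mul_sum]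
    exact Finset.sum_congr rfl fun x _ => by ring

lemma pairS_add_right (u φ ψ : V → ℝ) :
    pairS w μ h m p u (φ + ψ) = pairS w μ h m p u φ + pairS w μ h m p u ψ := by
  unfold pairS
  rw [Bmp_add_right]
  simp only [Pi.add_apply, intV]
  rw [show (∑ x, (μ x * (h x * |u x| ^ (p-2) * u x * (φ x + ψ x))))
      = ∑ x, (μ x * (h x * |u x| ^ (p-2) * u x * φ x) + μ x * (h x * |u x| ^ (p-2) * u x * ψ x))
    from Finset.sum_congr rfl fun x _ => by ring]
  rw [Finset.sum_add_distrib]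
  ring

lemma pairS_smul_right (u : V → ℝ) (c : ℝ) (φ : V → ℝ) :
    pairS w μ h m p u (c • φ) = c * pairS w μ h m p u φ := by
  unfold pairS
  rw [Bmp_smul_right]
  simp only [Pi.smul_apply, smul_eq_mul, intV, Finset.mul_sum]
  rw [show (∑ x, μ x * (h x * |u x| ^ (p-2) * u x * (c * φ x)))
      = ∑ x, c * (μ x * (h x * |u x| ^ (p-2) * u x * φ x))
    from Finset.sum_congr rfl fun x _ => by ring]
  rw [← Finset.mul_sum]
  ring

lemma pairS_sub_right (u φ ψ : V → ℝ) :
    pairS w μ h m p u (φ - ψ) = pairS w μ h m p u φ - pairS w μ h m p u ψ := by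
  have hd : φ - ψ = φ + (-1 : ℝ) • ψ := by funext z; simp; ring
  rw [hd, pairS_add_right, pairS_smul_right]; ring

end SectionC

noncomputable section SectionC2
open Real
variable {V : Type*} [Fintype V] (w : V → V → ℝ) (μ : V → ℝ) (h : V → ℝ) (m : ℕ) {p : ℝ}

lemma PhiS_hasDerivAt (hp : 2 ≤ p) (hw_nonneg : ∀ x y, 0 ≤ w x y) (hμ : ∀ x, 0 < μ x)
    (u φ : V → ℝ) :
    HasDerivAt (fun t : ℝ => PhiS w μ h m p (u + t • φ)) (pairS w μ h m p u φ) 0 := by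
  have hp0 : (p : ℝ) ≠ 0 := by linarith
  set D1 : V → ℝ := fun x =>
    if m % 2 = 1 then
      gradm w μ m u x ^ (p - 2) *
        ggam w μ ((glap w μ)^[(m - 1) / 2] u) ((glap w μ)^[(m - 1) / 2] φ) x
    else gradm w μ m u x ^ (p - 2) *
      ((glap w μ)^[m / 2] u x) * ((glap w μ)^[m / 2] φ x) with hD1
  have hgrad : ∀ x : V, HasDerivAt (fun t : ℝ => gradm w μ m (u + t • φ) x ^ p)
      (p * D1 x) 0 := by
    intro x
    by_cases hodd : m % 2 = 1
    · set k := (m - 1) / 2 with hk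
      set U := (glap w μ)^[k] u with hU
      set Φ := (glap w μ)^[k] φ with hΦ
      set c0 := ggam w μ U U x with hc0def
      set c1 := ggam w μ U Φ x with hc1def
      set c2 := ggam w μ Φ Φ x with hc2def
      have hc0 : 0 ≤ c0 := ggam_self_nonneg w μ hw_nonneg hμ U x
      have hfun : (fun t : ℝ => gradm w μ m (u + t • φ) x ^ p)
          = fun t => (c0 + 2 * c1 * t + c2 * t ^ 2) ^ (p / 2) := by
        funext t
        have hnn : 0 ≤ ggam w μ ((glap w μ)^[k] (u + t • φ)) ((glap w μ)^[k] (u + t • φ)) x :=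
          ggam_self_nonneg w μ hw_nonneg hμ _ x
        unfold gradm
        rw [if_pos hodd, gnorm, ← hk, sqrt_rpow' _ hnn p, iter_glap_add_smul, ggam_expand,
          ← hU, ← hΦ, ← hc0def, ← hc1def, ← hc2def]
      rw [hfun]
      have hder := hasDerivAt_quad_rpow hp c0 c1 c2
      convert hder using 1
      have hgr : gradm w μ m u x = Real.sqrt c0 := by
        unfold gradm; rw [if_pos hodd, gnorm, ← hk, ← hU, ← hc0def]
      rw [hD1]
      simp only [if_pos hodd]
      rw [hgr, sqrt_rpow' _ hc0, ← hc1def]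
      ring
    · set k := m / 2 with hk
      set a := (glap w μ)^[k] u x with ha
      set b := (glap w μ)^[k] φ x with hb
      have hfun : (fun t : ℝ => gradm w μ m (u + t • φ) x ^ p)
          = fun t => |a + t * b| ^ p := by
        funext t
        unfold gradm
        rw [if_neg hodd, ← hk, iter_glap_add_smul]
        simp [Pi.add_apply, Pi.smul_apply, smul_eq_mul]
        rfl
      rw [hfun]
      have hder := hasDerivAt_abs_rpow' hp a b
      convert hder using 1
      have hgr : gradm w μ m u x = |a| := by
        unfold gradm; rw [if_neg hodd, ← hk, ← ha]
      rw [hD1]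
      simp only [if_neg hodd]
      rw [hgr]
      ring
  have hh : ∀ x : V, HasDerivAt (fun t : ℝ => h x * |u x + t * φ x| ^ p)
      (h x * (p * |u x| ^ (p - 2) * u x * φ x)) 0 :=
    fun x => (hasDerivAt_abs_rpow' hp (u x) (φ x)).const_mul (h x)
  have hsum : HasDerivAt
      (fun t : ℝ => ∑ x, μ x * (gradm w μ m (u + t • φ) x ^ p + h x * |u x + t * φ x| ^ p))
      (∑ x, μ x * (p * D1 x + h x * (p * |u x| ^ (p - 2) * u x * φ x))) 0 :=
    HasDerivAt.fun_sum fun x _ => ((hgrad x).add (hh x)).const_mul (μ x)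
  have hfinal := hsum.const_mul (1 / p)
  have heq : (1 / p) * (∑ x, μ x * (p * D1 x + h x * (p * |u x| ^ (p - 2) * u x * φ x)))
      = pairS w μ h m p u φ := by
    unfold pairS Bmp intV
    rw [Finset.mul_sum]
    by_cases hodd : m % 2 = 1
    · simp only [if_pos hodd, hD1]
      rw [← Finset.sum_add_distrib]
      exact Finset.sum_congr rfl fun x _ => by field_simp
    · simp only [if_neg hodd, hD1]
      rw [← Finset.sum_add_distrib]
      exact Finset.sum_congr rfl fun x _ => by field_simp
  rw [heq] at hfinal
  exact hfinal

lemma Bmp_self_nonneg (hp : 2 ≤ p) (hw_nonneg : ∀ x y, 0 ≤ w x y) (hμ : ∀ x, 0 < μ x)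
    (u : V → ℝ) : 0 ≤ Bmp w μ m p u u := by
  unfold Bmp
  split
  · exact Finset.sum_nonneg fun x _ => mul_nonneg (hμ x).le
      (mul_nonneg (Real.rpow_nonneg (gradm_nonneg w μ m u x) _)
        (ggam_self_nonneg w μ hw_nonneg hμ _ x))
  · exact Finset.sum_nonneg fun x _ => mul_nonneg (hμ x).le
      (by nlinarith [Real.rpow_nonneg (gradm_nonneg w μ m u x) (p - 2),
        sq_nonneg ((glap w μ)^[m / 2] u x)])

lemma Bmp_mono (hp : 2 ≤ p) (hw_nonneg : ∀ x y, 0 ≤ w x y) (hμ : ∀ x, 0 < μ x)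
    (u u' : V → ℝ) :
    0 ≤ Bmp w μ m p u (u - u') - Bmp w μ m p u' (u - u') := by
  unfold Bmp
  split
  case isTrue hodd =>
    set k := (m - 1) / 2 with hk
    set U := (glap w μ)^[k] u with hU
    set U' := (glap w μ)^[k] u' with hU'
    unfold intV
    rw [← Finset.sum_sub_distrib]
    apply Finset.sum_nonneg
    intro x _
    dsimp only
    rw [iter_glap_sub, ← hU, ← hU']
    set A := gradm w μ m u x with hA
    set B := gradm w μ m u' x with hB
    have hAeq : A * A = ggam w μ U U x := by
      rw [hA]; unfold gradm; rw [if_pos hodd, ← hk, ← hU]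
      exact gnorm_mul_self w μ hw_nonneg hμ U x
    have hBeq : B * B = ggam w μ U' U' x := by
      rw [hB]; unfold gradm; rw [if_pos hodd, ← hk, ← hU']
      exact gnorm_mul_self w μ hw_nonneg hμ U' x
    have hgA : gnorm w μ U x = A := by
      rw [hA]; unfold gradm; rw [if_pos hodd, ← hk, ← hU]
    have hgB : gnorm w μ U' x = B := by
      rw [hB]; unfold gradm; rw [if_pos hodd, ← hk, ← hU']
    have hA0 : 0 ≤ A := hA ▸ gradm_nonneg w μ m u x
    have hB0 : 0 ≤ B := hB ▸ gradm_nonneg w μ m u' x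
    have hcs : |ggam w μ U U' x| ≤ A * B := by
      have := ggam_cauchy_schwarz w μ hw_nonneg hμ U U' x
      rwa [hgA, hgB] at this
    have hcomm : ggam w μ U' U x = ggam w μ U U' x := ggam_comm w μ U' U x
    set g := ggam w μ U U' x with hg
    have hgle : g ≤ A * B := le_of_abs_le hcs
    have hpair := rpow_pair_mono hp A B hA0 hB0
    have hApow : 0 ≤ A ^ (p - 2) := Real.rpow_nonneg hA0 _
    have hBpow : 0 ≤ B ^ (p - 2) := Real.rpow_nonneg hB0 _
    rw [ggam_sub_right, ggam_sub_right, hcomm, ← hAeq, ← hBeq]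
    have expand : A ^ (p - 2) * (A * A - g) - B ^ (p - 2) * (g - B * B)
        = (A ^ (p - 2) * (A * A) - A ^ (p - 2) * (A * B) - B ^ (p - 2) * (A * B)
            + B ^ (p - 2) * (B * B))
          + (A ^ (p - 2) * (A * B - g) + B ^ (p - 2) * (A * B - g)) := by ring
    rw [← hg]
    have hterm : 0 ≤ A ^ (p - 2) * (A * A - g) - B ^ (p - 2) * (g - B * B) := by
      have h1 : 0 ≤ A ^ (p - 2) * (A * B - g) := mul_nonneg hApow (by linarith)
      have h2 : 0 ≤ B ^ (p - 2) * (A * B - g) := mul_nonneg hBpow (by linarith)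
      linarith [expand]
    nlinarith [mul_nonneg (hμ x).le hterm]
  case isFalse hodd =>
    set k := m / 2 with hk
    unfold intV
    rw [← Finset.sum_sub_distrib]
    apply Finset.sum_nonneg
    intro x _
    dsimp only
    rw [iter_glap_sub]
    set a := (glap w μ)^[k] u x with ha
    set b := (glap w μ)^[k] u' x with hb
    have hga : gradm w μ m u x = |a| := by
      unfold gradm; rw [if_neg hodd, ← hk, ← ha]
    have hgb : gradm w μ m u' x = |b| := by
      unfold gradm; rw [if_neg hodd, ← hk, ← hb]
    rw [hga, hgb]
    have := signed_rpow_mono_mul hp a b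
    have hpi : ((glap w μ)^[k] u - (glap w μ)^[k] u') x = a - b := by
      simp [Pi.sub_apply, ha, hb]
    rw [hpi]
    nlinarith [mul_nonneg (hμ x).le this]

lemma pairS_self_lower (hp : 2 ≤ p) (hw_nonneg : ∀ x y, 0 ≤ w x y) (hμ : ∀ x, 0 < μ x)
    (u : V → ℝ) :
    intV μ (fun x => h x * |u x| ^ p) ≤ pairS w μ h m p u u := by
  unfold pairS
  have heq : intV μ (fun x => h x * |u x| ^ (p - 2) * u x * u x)
      = intV μ (fun x => h x * |u x| ^ p) := by
    unfold intV
    exact Finset.sum_congr rfl fun x _ => by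
      dsimp only
      linear_combination (μ x * h x) * abs_rpow_mul_self_sq hp (u x)
  rw [heq]
  have := Bmp_self_nonneg w μ m hp hw_nonneg hμ u
  linarith

lemma PhiS_lower (hp : 2 ≤ p) (hw_nonneg : ∀ x y, 0 ≤ w x y) (hμ : ∀ x, 0 < μ x)
    (u : V → ℝ) :
    (1 / p) * intV μ (fun x => h x * |u x| ^ p) ≤ PhiS w μ h m p u := by
  unfold PhiS
  apply mul_le_mul_of_nonneg_left _ (by positivity)
  unfold intV
  apply Finset.sum_le_sum
  intro x _
  dsimp only
  have : 0 ≤ gradm w μ m u x ^ p := Real.rpow_nonneg (gradm_nonneg w μ m u x) p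
  nlinarith [mul_nonneg (hμ x).le this]

lemma hsum_norm_lower [Nonempty V] (hp0 : 0 ≤ p) (hh : ∀ x, 0 < h x) (hμ : ∀ x, 0 < μ x)
    {c : ℝ} (hc : ∀ x, c ≤ μ x * h x) (hc0 : 0 ≤ c) (u : V → ℝ) :
    c * ‖u‖ ^ p ≤ intV μ (fun x => h x * |u x| ^ p) := by
  obtain ⟨x0, hx0⟩ := Finite.exists_max (fun x => |u x|)
  have hnorm : ‖u‖ ≤ |u x0| := by
    rw [pi_norm_le_iff_of_nonneg (abs_nonneg _)]
    intro x; rw [Real.norm_eq_abs]; exact hx0 x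
  have h1 : ‖u‖ ^ p ≤ |u x0| ^ p := Real.rpow_le_rpow (norm_nonneg u) hnorm hp0
  have h2 : c * |u x0| ^ p ≤ μ x0 * (h x0 * |u x0| ^ p) := by
    have := hc x0
    have h3 : 0 ≤ |u x0| ^ p := Real.rpow_nonneg (abs_nonneg _) p
    nlinarith
  have h4 : μ x0 * (h x0 * |u x0| ^ p) ≤ intV μ (fun x => h x * |u x| ^ p) := by
    unfold intV
    exact Finset.single_le_sum (fun x _ => mul_nonneg (hμ x).le
      (mul_nonneg (hh x).le (Real.rpow_nonneg (abs_nonneg _) p))) (Finset.mem_univ x0)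
  have h5 : c * ‖u‖ ^ p ≤ c * |u x0| ^ p := mul_le_mul_of_nonneg_left h1 hc0
  linarith

end SectionC2

noncomputable section SectionC3
open Real
variable {V : Type*} [Fintype V] (w : V → V → ℝ) (μ : V → ℝ) (h : V → ℝ) (m : ℕ) {p : ℝ}

lemma pairS_mono (hp : 2 ≤ p) (hw_nonneg : ∀ x y, 0 ≤ w x y) (hμ : ∀ x, 0 < μ x)
    (u u' : V → ℝ) :
    intV μ (fun x => h x * ((|u x| ^ (p - 2) * u x - |u' x| ^ (p - 2) * u' x) * (u x - u' x)))
      ≤ pairS w μ h m p u (u - u') - pairS w μ h m p u' (u - u') := by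
  unfold pairS
  have hBmp := Bmp_mono w μ m hp hw_nonneg hμ u u'
  have heq : intV μ (fun x => h x * |u x| ^ (p - 2) * u x * ((u - u') x))
      - intV μ (fun x => h x * |u' x| ^ (p - 2) * u' x * ((u - u') x))
      = intV μ (fun x =>
          h x * ((|u x| ^ (p - 2) * u x - |u' x| ^ (p - 2) * u' x) * (u x - u' x))) := by
    unfold intV
    rw [← Finset.sum_sub_distrib]
    exact Finset.sum_congr rfl fun x _ => by dsimp only [Pi.sub_apply]; ring
  linarith

lemma hterm_pos (hp : 2 ≤ p) (hμ : ∀ x, 0 < μ x) (hh : ∀ x, 0 < h x)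
    {u u' : V → ℝ} (hne : u ≠ u') :
    0 < intV μ (fun x =>
        h x * ((|u x| ^ (p - 2) * u x - |u' x| ^ (p - 2) * u' x) * (u x - u' x))) := by
  obtain ⟨x0, hx0⟩ := Function.ne_iff.mp hne
  unfold intV
  apply Finset.sum_pos'
  · intro x _
    dsimp only
    exact mul_nonneg (hμ x).le (mul_nonneg (hh x).le (signed_rpow_mono_mul hp (u x) (u' x)))
  · refine ⟨x0, Finset.mem_univ x0, ?_⟩
    dsimp only
    exact mul_pos (hμ x0) (mul_pos (hh x0) (signed_rpow_strict_mul hp hx0))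

lemma cont_iter (k : ℕ) : ∀ y : V, Continuous fun u : V → ℝ => (glap w μ)^[k] u y := by
  induction k with
  | zero => exact fun y => continuous_apply y
  | succ n ih =>
    intro y
    simp only [Function.iterate_succ_apply']
    unfold glap
    exact continuous_const.mul (continuous_finset_sum _ fun z _ =>
      continuous_const.mul ((ih z).sub (ih y)))

lemma cont_ggam_aux {f g : (V → ℝ) → V → ℝ}
    (hf : ∀ y, Continuous fun u => f u y) (hg : ∀ y, Continuous fun u => g u y) (x : V) :
    Continuous fun u => ggam w μ (f u) (g u) x := by
  unfold ggam
  exact continuous_const.mul (continuous_finset_sum _ fun y _ =>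
    ((continuous_const.mul ((hf y).sub (hf x))).mul ((hg y).sub (hg x))))

lemma cont_gradm (x : V) : Continuous fun u : V → ℝ => gradm w μ m u x := by
  unfold gradm
  split
  · exact Real.continuous_sqrt.comp
      (cont_ggam_aux w μ (cont_iter w μ _) (cont_iter w μ _) x)
  · exact continuous_abs.comp (cont_iter w μ _ x)

lemma cont_pairS (hp : 2 ≤ p) (φ : V → ℝ) :
    Continuous fun u : V → ℝ => pairS w μ h m p u φ := by
  have hp2 : (0:ℝ) ≤ p - 2 := by linarith
  unfold pairS Bmp intV
  apply Continuous.add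
  · split
    · exact continuous_finset_sum _ fun x _ => continuous_const.mul
        ((((Real.continuous_rpow_const hp2).comp (cont_gradm w μ m x)).mul
          (cont_ggam_aux w μ (g := fun _ => (glap w μ)^[(m - 1) / 2] φ)
            (cont_iter w μ _) (fun y => continuous_const) x)))
    · exact continuous_finset_sum _ fun x _ => continuous_const.mul
        ((((Real.continuous_rpow_const hp2).comp (cont_gradm w μ m x)).mul
          (cont_iter w μ _ x)).mul continuous_const)
  · exact continuous_finset_sum _ fun x _ => continuous_const.mul
      (((continuous_const.mul ((Real.continuous_rpow_const hp2).comp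
        (continuous_abs.comp (continuous_apply x)))).mul (continuous_apply x)).mul
        continuous_const)

lemma cont_PhiS (hp : 2 ≤ p) : Continuous fun u : V → ℝ => PhiS w μ h m p u := by
  have hp0 : (0:ℝ) ≤ p := by linarith
  unfold PhiS intV
  apply Continuous.mul continuous_const
  exact continuous_finset_sum _ fun x _ => continuous_const.mul
    ((((Real.continuous_rpow_const hp0).comp (cont_gradm w μ m x)).add
      (continuous_const.mul ((Real.continuous_rpow_const hp0).comp
        (continuous_abs.comp (continuous_apply x))))))

end SectionC3

open Real Filter Function

set_option maxHeartbeats 4000000 in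
/-- Lemma 3.4: the Gâteaux derivative `T = Φ'` of the functional `Φ`, given by the stated
pairing formula, is a bijection from `W` onto `W*` with continuous inverse. -/
theorem stmt8 {V : Type*} [Fintype V] [Nonempty V]
    (w : V → V → ℝ) (μ : V → ℝ)
    (hw_symm : ∀ x y, w x y = w y x) (hw_nonneg : ∀ x y, 0 ≤ w x y)
    (hw_diag : ∀ x, w x x = 0) (hμ : ∀ x, 0 < μ x)
    (m1 m2 : ℕ) (hm1 : 1 ≤ m1) (hm2 : 1 ≤ m2)
    (p q : ℝ) (hp : 2 ≤ p) (hq : 2 ≤ q)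
    (h1 h2 : V → ℝ) (hh1 : ∀ x, 0 < h1 x) (hh2 : ∀ x, 0 < h2 x) :
    ∃ T : ((V → ℝ) × (V → ℝ)) → (((V → ℝ) × (V → ℝ)) →L[ℝ] ℝ),
      (∀ u v φ1 φ2 : V → ℝ, T (u, v) (φ1, φ2) =
          Bmp w μ m1 p u φ1 + intV μ (fun x => h1 x * |u x| ^ (p - 2) * u x * φ1 x) +
          Bmp w μ m2 q v φ2 + intV μ (fun x => h2 x * |v x| ^ (q - 2) * v x * φ2 x)) ∧
      Function.Bijective T ∧
      ∃ Tinv : (((V → ℝ) × (V → ℝ)) →L[ℝ] ℝ) → ((V → ℝ) × (V → ℝ)),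
        Function.LeftInverse Tinv T ∧ Function.RightInverse Tinv T ∧
          Continuous Tinv := by
  classical
  -- the operator T
  set TL : ((V → ℝ) × (V → ℝ)) → ((V → ℝ) × (V → ℝ)) →ₗ[ℝ] ℝ := fun z =>
    { toFun := fun φ => pairS w μ h1 m1 p z.1 φ.1 + pairS w μ h2 m2 q z.2 φ.2
      map_add' := fun φ ψ => by
        rw [show (φ + ψ).1 = φ.1 + ψ.1 from rfl, show (φ + ψ).2 = φ.2 + ψ.2 from rfl,
          pairS_add_right, pairS_add_right]
        ring
      map_smul' := fun c φ => by
        rw [show (c • φ).1 = c • φ.1 from rfl, show (c • φ).2 = c • φ.2 from rfl,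
          pairS_smul_right, pairS_smul_right, smul_eq_mul, RingHom.id_apply]
        ring } with hTLdef
  set T : ((V → ℝ) × (V → ℝ)) → (((V → ℝ) × (V → ℝ)) →L[ℝ] ℝ) := fun z =>
    LinearMap.toContinuousLinearMap (TL z) with hTdef
  have hTapp : ∀ z φ : (V → ℝ) × (V → ℝ),
      T z φ = pairS w μ h1 m1 p z.1 φ.1 + pairS w μ h2 m2 q z.2 φ.2 := fun z φ => rfl
  -- the stated formula
  have hformula : ∀ u v φ1 φ2 : V → ℝ, T (u, v) (φ1, φ2) =
      Bmp w μ m1 p u φ1 + intV μ (fun x => h1 x * |u x| ^ (p - 2) * u x * φ1 x) +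
      Bmp w μ m2 q v φ2 + intV μ (fun x => h2 x * |v x| ^ (q - 2) * v x * φ2 x) := by
    intro u v φ1 φ2
    rw [hTapp]
    unfold pairS
    ring
  -- injectivity of T
  have hinj : Function.Injective T := by
    intro z z' hTz
    have h0 : T z (z - z') - T z' (z - z') = 0 := by rw [hTz]; ring
    rw [hTapp, hTapp] at h0
    have e1 : (z - z').1 = z.1 - z'.1 := rfl
    have e2 : (z - z').2 = z.2 - z'.2 := rfl
    rw [e1, e2] at h0
    have hm1' := pairS_mono w μ h1 m1 hp hw_nonneg hμ z.1 z'.1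
    have hm2' := pairS_mono w μ h2 m2 hq hw_nonneg hμ z.2 z'.2
    by_contra hne
    have hcomp : z.1 ≠ z'.1 ∨ z.2 ≠ z'.2 := by
      by_contra hcon
      push_neg at hcon
      exact hne (Prod.ext hcon.1 hcon.2)
    have hn1 : 0 ≤ intV μ (fun x =>
        h1 x * ((|z.1 x| ^ (p - 2) * z.1 x - |z'.1 x| ^ (p - 2) * z'.1 x) * (z.1 x - z'.1 x))) := by
      apply Finset.sum_nonneg
      intro x _
      exact mul_nonneg (hμ x).le (mul_nonneg (hh1 x).le (signed_rpow_mono_mul hp _ _))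
    have hn2 : 0 ≤ intV μ (fun x =>
        h2 x * ((|z.2 x| ^ (q - 2) * z.2 x - |z'.2 x| ^ (q - 2) * z'.2 x) * (z.2 x - z'.2 x))) := by
      apply Finset.sum_nonneg
      intro x _
      exact mul_nonneg (hμ x).le (mul_nonneg (hh2 x).le (signed_rpow_mono_mul hq _ _))
    rcases hcomp with hc | hc
    · have := hterm_pos μ h1 hp hμ hh1 hc
      linarith
    · have := hterm_pos μ h2 hq hμ hh2 hc
      linarith
  -- positive constants
  set c1 : ℝ := fmin (fun x => μ x * h1 x) with hc1def
  set c2 : ℝ := fmin (fun x => μ x * h2 x) with hc2def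
  have hc1pos : 0 < c1 := by
    rw [hc1def]; unfold fmin; rw [Finset.lt_inf'_iff]
    exact fun x _ => mul_pos (hμ x) (hh1 x)
  have hc2pos : 0 < c2 := by
    rw [hc2def]; unfold fmin; rw [Finset.lt_inf'_iff]
    exact fun x _ => mul_pos (hμ x) (hh2 x)
  have hc1le : ∀ x, c1 ≤ μ x * h1 x := fun x => Finset.inf'_le _ (Finset.mem_univ x)
  have hc2le : ∀ x, c2 ≤ μ x * h2 x := fun x => Finset.inf'_le _ (Finset.mem_univ x)
  have hsq : ∀ r : ℝ, r ^ (2:ℝ) = r * r := fun r => by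
    rw [show ((2:ℝ)) = ((2:ℕ):ℝ) by norm_num, Real.rpow_natCast]; ring
  -- norm lower bounds for the h-sums
  have hlb1 : ∀ u : V → ℝ, c1 * ‖u‖ ^ p ≤ intV μ (fun x => h1 x * |u x| ^ p) :=
    fun u => hsum_norm_lower μ h1 (by linarith) hh1 hμ hc1le hc1pos.le u
  have hlb2 : ∀ u : V → ℝ, c2 * ‖u‖ ^ q ≤ intV μ (fun x => h2 x * |u x| ^ q) :=
    fun u => hsum_norm_lower μ h2 (by linarith) hh2 hμ hc2le hc2pos.le u
  have hint1nn : ∀ u : V → ℝ, 0 ≤ intV μ (fun x => h1 x * |u x| ^ p) :=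
    fun u => Finset.sum_nonneg fun x _ => mul_nonneg (hμ x).le
      (mul_nonneg (hh1 x).le (Real.rpow_nonneg (abs_nonneg _) p))
  have hint2nn : ∀ u : V → ℝ, 0 ≤ intV μ (fun x => h2 x * |u x| ^ q) :=
    fun u => Finset.sum_nonneg fun x _ => mul_nonneg (hμ x).le
      (mul_nonneg (hh2 x).le (Real.rpow_nonneg (abs_nonneg _) q))
  -- surjectivity of T
  have hsurj : Function.Surjective T := by
    intro f
    set Ψ : ((V → ℝ) × (V → ℝ)) → ℝ := fun z =>
      PhiS w μ h1 m1 p z.1 + PhiS w μ h2 m2 q z.2 - f z with hΨdef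
    have hcont : Continuous Ψ :=
      (((cont_PhiS w μ h1 m1 hp).comp continuous_fst).add
        ((cont_PhiS w μ h2 m2 hq).comp continuous_snd)).sub f.continuous
    set d : ℝ := min (c1 / p) (c2 / q) with hddef
    have hd : 0 < d := lt_min (by positivity) (by positivity)
    have hPhi1nn : ∀ u : V → ℝ, 0 ≤ PhiS w μ h1 m1 p u := fun u => by
      have hA := PhiS_lower w μ h1 m1 hp hw_nonneg hμ u
      have hB : 0 ≤ (1 / p) * intV μ (fun x => h1 x * |u x| ^ p) := by
        have := hint1nn u; positivity
      linarith
    have hPhi2nn : ∀ u : V → ℝ, 0 ≤ PhiS w μ h2 m2 q u := fun u => by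
      have hA := PhiS_lower w μ h2 m2 hq hw_nonneg hμ u
      have hB : 0 ≤ (1 / q) * intV μ (fun x => h2 x * |u x| ^ q) := by
        have := hint2nn u; positivity
      linarith
    have hΦlower : ∀ z : (V → ℝ) × (V → ℝ), 1 ≤ ‖z‖ →
        d * (‖z‖ * ‖z‖) ≤ PhiS w μ h1 m1 p z.1 + PhiS w μ h2 m2 q z.2 := by
      intro z hz
      have hmax : ‖z‖ = max ‖z.1‖ ‖z.2‖ := rfl
      rcases max_choice ‖z.1‖ ‖z.2‖ with hcs | hcs
      · have hzeq : ‖z‖ = ‖z.1‖ := hmax.trans hcs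
        have h1z : 1 ≤ ‖z.1‖ := hzeq ▸ hz
        have hexp : ‖z.1‖ * ‖z.1‖ ≤ ‖z.1‖ ^ p := by
          rw [← hsq ‖z.1‖]
          exact Real.rpow_le_rpow_of_exponent_le h1z (by linarith)
        have hA : d * (‖z‖ * ‖z‖) ≤ (c1 / p) * ‖z.1‖ ^ p := by
          rw [hzeq]
          have hd1 : d ≤ c1 / p := min_le_left _ _
          nlinarith [mul_nonneg (norm_nonneg z.1) (norm_nonneg z.1),
            Real.rpow_nonneg (norm_nonneg z.1) p]
        have hB : (c1 / p) * ‖z.1‖ ^ p ≤ (1 / p) * intV μ (fun x => h1 x * |z.1 x| ^ p) := by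
          have hpinv : (0:ℝ) ≤ 1 / p := by positivity
          have h' := mul_le_mul_of_nonneg_left (hlb1 z.1) hpinv
          calc (c1 / p) * ‖z.1‖ ^ p = (1 / p) * (c1 * ‖z.1‖ ^ p) := by ring
            _ ≤ (1 / p) * intV μ (fun x => h1 x * |z.1 x| ^ p) := h'
        have hC := PhiS_lower w μ h1 m1 hp hw_nonneg hμ z.1
        have hD := hPhi2nn z.2
        linarith
      · have hzeq : ‖z‖ = ‖z.2‖ := hmax.trans hcs
        have h1z : 1 ≤ ‖z.2‖ := hzeq ▸ hz
        have hexp : ‖z.2‖ * ‖z.2‖ ≤ ‖z.2‖ ^ q := by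
          rw [← hsq ‖z.2‖]
          exact Real.rpow_le_rpow_of_exponent_le h1z (by linarith)
        have hA : d * (‖z‖ * ‖z‖) ≤ (c2 / q) * ‖z.2‖ ^ q := by
          rw [hzeq]
          have hd1 : d ≤ c2 / q := min_le_right _ _
          nlinarith [mul_nonneg (norm_nonneg z.2) (norm_nonneg z.2),
            Real.rpow_nonneg (norm_nonneg z.2) q]
        have hB : (c2 / q) * ‖z.2‖ ^ q ≤ (1 / q) * intV μ (fun x => h2 x * |z.2 x| ^ q) := by
          have hqinv : (0:ℝ) ≤ 1 / q := by positivity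
          have h' := mul_le_mul_of_nonneg_left (hlb2 z.2) hqinv
          calc (c2 / q) * ‖z.2‖ ^ q = (1 / q) * (c2 * ‖z.2‖ ^ q) := by ring
            _ ≤ (1 / q) * intV μ (fun x => h2 x * |z.2 x| ^ q) := h'
        have hC := PhiS_lower w μ h2 m2 hq hw_nonneg hμ z.2
        have hD := hPhi1nn z.1
        linarith
    have hbound : ∀ z : (V → ℝ) × (V → ℝ), d * (‖z‖ * ‖z‖) - ‖f‖ * ‖z‖ - d ≤ Ψ z := by
      intro z
      have hf : f z ≤ ‖f‖ * ‖z‖ := le_trans (le_abs_self _) (f.le_opNorm z)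
      rcases le_or_gt 1 ‖z‖ with hz | hz
      · have := hΦlower z hz
        simp only [hΨdef]
        linarith [hd.le]
      · have hA := hPhi1nn z.1
        have hB := hPhi2nn z.2
        have hC : d * (‖z‖ * ‖z‖) ≤ d := by
          have hz1 : ‖z‖ * ‖z‖ ≤ 1 := mul_le_one₀ hz.le (norm_nonneg z) hz.le
          nlinarith [hd.le]
        simp only [hΨdef]
        linarith
    have hcoer : Tendsto Ψ (cocompact ((V → ℝ) × (V → ℝ))) atTop := by
      have hpoly : Tendsto (fun r : ℝ => d * (r * r) - ‖f‖ * r - d) atTop atTop := by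
        have h1 : Tendsto (fun r : ℝ => d * r - ‖f‖) atTop atTop := by
          have := tendsto_atTop_add_const_right atTop (-‖f‖)
            (tendsto_id.const_mul_atTop hd)
          exact this.congr fun r => by simp only [id_eq]; ring
        have h2 : Tendsto (fun r : ℝ => r * (d * r - ‖f‖)) atTop atTop :=
          tendsto_id.atTop_mul_atTop₀ h1
        have h3 := tendsto_atTop_add_const_right atTop (-d) h2
        exact h3.congr fun r => by ring
      exact tendsto_atTop_mono hbound (hpoly.comp tendsto_norm_cocompact_atTop)
    obtain ⟨z0, hz0⟩ := hcont.exists_forall_le hcoer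
    refine ⟨z0, ?_⟩
    apply ContinuousLinearMap.ext
    intro ζ
    have hloc : IsLocalMin (fun t : ℝ => Ψ (z0 + t • ζ)) 0 := by
      apply Filter.Eventually.of_forall
      intro t
      have h00 : z0 + (0:ℝ) • ζ = z0 := by simp
      show Ψ (z0 + (0:ℝ) • ζ) ≤ Ψ (z0 + t • ζ)
      rw [h00]
      exact hz0 _
    have hD : HasDerivAt (fun t : ℝ => Ψ (z0 + t • ζ)) (T z0 ζ - f ζ) 0 := by
      have hphi : HasDerivAt (fun t : ℝ =>
          PhiS w μ h1 m1 p ((z0 + t • ζ).1) + PhiS w μ h2 m2 q ((z0 + t • ζ).2)) (T z0 ζ) 0 := by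
        rw [hTapp]
        exact (PhiS_hasDerivAt w μ h1 m1 hp hw_nonneg hμ z0.1 ζ.1).add
          (PhiS_hasDerivAt w μ h2 m2 hq hw_nonneg hμ z0.2 ζ.2)
      have hfd : HasDerivAt (fun t : ℝ => f (z0 + t • ζ)) (f ζ) 0 := by
        have heqf : (fun t : ℝ => f (z0 + t • ζ)) = fun t => f z0 + t * f ζ := by
          funext t
          rw [map_add, map_smul, smul_eq_mul]
        rw [heqf]
        simpa using ((hasDerivAt_id (0:ℝ)).mul_const (f ζ)).const_add (f z0)
      exact hphi.sub hfd
    have hzero := hloc.hasDerivAt_eq_zero hD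
    linarith
  -- coordinates of a functional
  set coordFn : (((V → ℝ) × (V → ℝ)) →L[ℝ] ℝ) → ((V → ℝ) × (V → ℝ)) := fun f =>
    (fun x => f (Pi.single x 1, 0), fun x => f (0, Pi.single x 1)) with hcoorddef
  have hdecomp : ∀ φ : (V → ℝ) × (V → ℝ),
      φ = (∑ x, φ.1 x • ((Pi.single x 1 : V → ℝ), (0 : V → ℝ)))
        + ∑ x, φ.2 x • ((0 : V → ℝ), (Pi.single x 1 : V → ℝ)) := by
    intro φ
    apply Prod.ext
    · simp only [Prod.fst_add, Prod.fst_sum, Prod.smul_mk, smul_zero, Finset.sum_const_zero,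
        add_zero]
      funext y
      simp [Finset.sum_apply, Pi.single_apply, mul_ite]
    · simp only [Prod.snd_add, Prod.snd_sum, Prod.smul_mk, smul_zero, Finset.sum_const_zero,
        zero_add]
      funext y
      simp [Finset.sum_apply, Pi.single_apply, mul_ite]
  have happly : ∀ (f : ((V → ℝ) × (V → ℝ)) →L[ℝ] ℝ) (φ : (V → ℝ) × (V → ℝ)),
      f φ = ∑ x, φ.1 x * f (Pi.single x 1, 0) + ∑ x, φ.2 x * f (0, Pi.single x 1) := by
    intro f φ
    conv_lhs => rw [hdecomp φ]
    rw [map_add, map_sum, map_sum]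
    simp only [map_smul, smul_eq_mul]
  -- S : coordinates of T
  set S : ((V → ℝ) × (V → ℝ)) → ((V → ℝ) × (V → ℝ)) := fun z => coordFn (T z) with hSdef
  have hScont : Continuous S := by
    apply Continuous.prodMk
    · apply continuous_pi
      intro x
      have : (fun z : (V → ℝ) × (V → ℝ) => T z ((Pi.single x 1 : V → ℝ), (0 : V → ℝ)))
          = fun z => pairS w μ h1 m1 p z.1 (Pi.single x 1) + pairS w μ h2 m2 q z.2 0 := by
        funext z; rw [hTapp]
      show Continuous fun z : (V → ℝ) × (V → ℝ) => T z ((Pi.single x 1 : V → ℝ), (0 : V → ℝ))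
      rw [this]
      exact ((cont_pairS w μ h1 m1 hp (Pi.single x 1)).comp continuous_fst).add
        ((cont_pairS w μ h2 m2 hq 0).comp continuous_snd)
    · apply continuous_pi
      intro x
      have : (fun z : (V → ℝ) × (V → ℝ) => T z ((0 : V → ℝ), (Pi.single x 1 : V → ℝ)))
          = fun z => pairS w μ h1 m1 p z.1 0 + pairS w μ h2 m2 q z.2 (Pi.single x 1) := by
        funext z; rw [hTapp]
      show Continuous fun z : (V → ℝ) × (V → ℝ) => T z ((0 : V → ℝ), (Pi.single x 1 : V → ℝ))
      rw [this]
      exact ((cont_pairS w μ h1 m1 hp 0).comp continuous_fst).add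
        ((cont_pairS w μ h2 m2 hq (Pi.single x 1)).comp continuous_snd)
  -- operator norm controlled by coordinates
  set N : ℝ := 2 * (Fintype.card V : ℝ) with hNdef
  have hN : 0 < N := by
    have := Fintype.card_pos (α := V)
    rw [hNdef]
    positivity
  have hTle : ∀ z, ‖T z‖ ≤ N * ‖S z‖ := by
    intro z
    apply ContinuousLinearMap.opNorm_le_bound _ (by positivity)
    intro φ
    rw [Real.norm_eq_abs, happly (T z) φ]
    have hcoord1 : ∀ x, |T z ((Pi.single x 1 : V → ℝ), (0 : V → ℝ))| ≤ ‖S z‖ := by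
      intro x
      have e : T z ((Pi.single x 1 : V → ℝ), (0 : V → ℝ)) = (S z).1 x := rfl
      rw [e]
      exact le_trans (norm_le_pi_norm (S z).1 x) (norm_fst_le (S z))
    have hcoord2 : ∀ x, |T z ((0 : V → ℝ), (Pi.single x 1 : V → ℝ))| ≤ ‖S z‖ := by
      intro x
      have e : T z ((0 : V → ℝ), (Pi.single x 1 : V → ℝ)) = (S z).2 x := rfl
      rw [e]
      exact le_trans (norm_le_pi_norm (S z).2 x) (norm_snd_le (S z))
    have hφ1 : ∀ x, |φ.1 x| ≤ ‖φ‖ :=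
      fun x => le_trans (norm_le_pi_norm φ.1 x) (norm_fst_le φ)
    have hφ2 : ∀ x, |φ.2 x| ≤ ‖φ‖ :=
      fun x => le_trans (norm_le_pi_norm φ.2 x) (norm_snd_le φ)
    calc |∑ x, φ.1 x * T z (Pi.single x 1, 0) + ∑ x, φ.2 x * T z (0, Pi.single x 1)|
        ≤ |∑ x, φ.1 x * T z (Pi.single x 1, 0)| + |∑ x, φ.2 x * T z (0, Pi.single x 1)| :=
          abs_add_le _ _
      _ ≤ (∑ x, |φ.1 x * T z (Pi.single x 1, 0)|) + ∑ x, |φ.2 x * T z (0, Pi.single x 1)| :=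
          add_le_add (Finset.abs_sum_le_sum_abs _ _) (Finset.abs_sum_le_sum_abs _ _)
      _ ≤ (∑ _x : V, ‖φ‖ * ‖S z‖) + ∑ _x : V, ‖φ‖ * ‖S z‖ := by
          apply add_le_add <;>
          · apply Finset.sum_le_sum
            intro x _
            rw [abs_mul]
            first
            | exact mul_le_mul (hφ1 x) (hcoord1 x) (abs_nonneg _) (norm_nonneg _)
            | exact mul_le_mul (hφ2 x) (hcoord2 x) (abs_nonneg _) (norm_nonneg _)
      _ = N * ‖S z‖ * ‖φ‖ := by
          simp only [Finset.sum_const, nsmul_eq_mul, Finset.card_univ, hNdef]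
          ring
  -- S is injective and surjective
  have hSinj : Function.Injective S := by
    intro z z' hS
    apply hinj
    apply ContinuousLinearMap.ext
    intro φ
    have hfstc : (fun x => T z ((Pi.single x 1 : V → ℝ), (0:V → ℝ)))
        = fun x => T z' ((Pi.single x 1 : V → ℝ), (0:V → ℝ)) := congrArg Prod.fst hS
    have hsndc : (fun x => T z ((0:V → ℝ), (Pi.single x 1 : V → ℝ)))
        = fun x => T z' ((0:V → ℝ), (Pi.single x 1 : V → ℝ)) := congrArg Prod.snd hS
    rw [happly (T z) φ, happly (T z') φ]
    congr 1
    · exact Finset.sum_congr rfl fun x _ => by rw [congrFun hfstc x]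
    · exact Finset.sum_congr rfl fun x _ => by rw [congrFun hsndc x]
  have hSsurj : Function.Surjective S := by
    intro y
    set g : ((V → ℝ) × (V → ℝ)) →ₗ[ℝ] ℝ :=
      { toFun := fun φ => ∑ x, y.1 x * φ.1 x + ∑ x, y.2 x * φ.2 x
        map_add' := fun φ ψ => by
          rw [show (φ + ψ).1 = φ.1 + ψ.1 from rfl, show (φ + ψ).2 = φ.2 + ψ.2 from rfl]
          simp only [Pi.add_apply, mul_add, Finset.sum_add_distrib]
          ring
        map_smul' := fun c φ => by
          rw [show (c • φ).1 = c • φ.1 from rfl, show (c • φ).2 = c • φ.2 from rfl,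
            RingHom.id_apply]
          simp only [Pi.smul_apply, smul_eq_mul, Finset.mul_sum]
          rw [Finset.sum_congr rfl fun x _ => show y.1 x * (c * φ.1 x) = c * (y.1 x * φ.1 x)
              by ring,
            Finset.sum_congr rfl fun x _ => show y.2 x * (c * φ.2 x) = c * (y.2 x * φ.2 x)
              by ring]
          rw [← Finset.mul_sum, ← Finset.mul_sum]
          ring } with hgdef
    obtain ⟨z, hz⟩ := hsurj (LinearMap.toContinuousLinearMap g)
    refine ⟨z, ?_⟩
    have hcoordg : coordFn (LinearMap.toContinuousLinearMap g) = y := by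
      apply Prod.ext
      · funext x
        show (∑ x', y.1 x' * (Pi.single x 1 : V → ℝ) x') + (∑ x', y.2 x' * (0:V → ℝ) x')
          = y.1 x
        simp [Pi.single_apply, mul_ite]
      · funext x
        show (∑ x', y.1 x' * (0:V → ℝ) x') + (∑ x', y.2 x' * (Pi.single x 1 : V → ℝ) x')
          = y.2 x
        simp [Pi.single_apply, mul_ite]
    rw [hSdef]
    show coordFn (T z) = y
    rw [hz, hcoordg]
  -- coercivity of T and properness of S
  set cmin : ℝ := min c1 c2 with hcmindef
  have hcmin : 0 < cmin := lt_min hc1pos hc2pos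
  have hTzlow : ∀ z : (V → ℝ) × (V → ℝ), 1 ≤ ‖z‖ → cmin * (‖z‖ * ‖z‖) ≤ T z z := by
    intro z hz
    rw [hTapp]
    have hp1 := pairS_self_lower w μ h1 m1 hp hw_nonneg hμ z.1
    have hp2 := pairS_self_lower w μ h2 m2 hq hw_nonneg hμ z.2
    have hmax : ‖z‖ = max ‖z.1‖ ‖z.2‖ := rfl
    rcases max_choice ‖z.1‖ ‖z.2‖ with hcs | hcs
    · have hzeq : ‖z‖ = ‖z.1‖ := hmax.trans hcs
      have h1z : 1 ≤ ‖z.1‖ := hzeq ▸ hz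
      have hexp : ‖z.1‖ * ‖z.1‖ ≤ ‖z.1‖ ^ p := by
        rw [← hsq ‖z.1‖]
        exact Real.rpow_le_rpow_of_exponent_le h1z (by linarith)
      have hA : cmin * (‖z‖ * ‖z‖) ≤ c1 * ‖z.1‖ ^ p := by
        rw [hzeq]
        have : cmin ≤ c1 := min_le_left _ _
        nlinarith [mul_nonneg (norm_nonneg z.1) (norm_nonneg z.1),
          Real.rpow_nonneg (norm_nonneg z.1) p]
      have hB := hlb1 z.1
      have hC := hlb2 z.2
      have hD : 0 ≤ c2 * ‖z.2‖ ^ q :=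
        mul_nonneg hc2pos.le (Real.rpow_nonneg (norm_nonneg _) q)
      linarith
    · have hzeq : ‖z‖ = ‖z.2‖ := hmax.trans hcs
      have h1z : 1 ≤ ‖z.2‖ := hzeq ▸ hz
      have hexp : ‖z.2‖ * ‖z.2‖ ≤ ‖z.2‖ ^ q := by
        rw [← hsq ‖z.2‖]
        exact Real.rpow_le_rpow_of_exponent_le h1z (by linarith)
      have hA : cmin * (‖z‖ * ‖z‖) ≤ c2 * ‖z.2‖ ^ q := by
        rw [hzeq]
        have : cmin ≤ c2 := min_le_right _ _
        nlinarith [mul_nonneg (norm_nonneg z.2) (norm_nonneg z.2),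
          Real.rpow_nonneg (norm_nonneg z.2) q]
      have hB := hlb2 z.2
      have hC := hlb1 z.1
      have hD : 0 ≤ c1 * ‖z.1‖ ^ p :=
        mul_nonneg hc1pos.le (Real.rpow_nonneg (norm_nonneg _) p)
      linarith
  have hSlow : ∀ z : (V → ℝ) × (V → ℝ), 1 ≤ ‖z‖ → cmin * ‖z‖ ≤ N * ‖S z‖ := by
    intro z hz
    have h1 := hTzlow z hz
    have h2 : T z z ≤ ‖T z‖ * ‖z‖ := le_trans (le_abs_self _) ((T z).le_opNorm z)
    have h3 := hTle z
    have hz0 : (0:ℝ) < ‖z‖ := lt_of_lt_of_le one_pos hz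
    have hSz : 0 ≤ ‖S z‖ := norm_nonneg _
    nlinarith
  have hproper : ∀ K : Set ((V → ℝ) × (V → ℝ)), IsCompact K → IsCompact (S ⁻¹' K) := by
    intro K hK
    obtain ⟨M, hM⟩ := (Metric.isBounded_iff_subset_closedBall 0).mp hK.isBounded
    have hMn : ∀ y ∈ K, ‖y‖ ≤ M := fun y hy => by
      have := hM hy
      rwa [Metric.mem_closedBall, dist_zero_right] at this
    apply Metric.isCompact_of_isClosed_isBounded
    · exact hK.isClosed.preimage hScont
    · rw [Metric.isBounded_iff_subset_closedBall 0]
      refine ⟨max 1 (N * M / cmin), fun z hz => ?_⟩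
      rw [Metric.mem_closedBall, dist_zero_right]
      rcases le_or_gt ‖z‖ 1 with h | h
      · exact le_trans h (le_max_left _ _)
      · have h1 := hSlow z h.le
        have h2 : ‖S z‖ ≤ M := hMn (S z) hz
        have : ‖z‖ ≤ N * M / cmin := by
          rw [le_div_iff₀ hcmin]
          nlinarith
        exact le_trans this (le_max_right _ _)
  have hSproper : IsProperMap S := isProperMap_iff_isCompact_preimage.mpr ⟨hScont, hproper⟩
  have hSclosed : IsClosedMap S := hSproper.isClosedMap
  -- the inverse
  set eS : ((V → ℝ) × (V → ℝ)) ≃ ((V → ℝ) × (V → ℝ)) := Equiv.ofBijective S ⟨hSinj, hSsurj⟩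
    with heSdef
  have heScont : Continuous (eS.symm : ((V → ℝ) × (V → ℝ)) → ((V → ℝ) × (V → ℝ))) := by
    rw [continuous_iff_isClosed]
    intro C hC
    have himg : (eS.symm : _ → _) ⁻¹' C = S '' C := by
      rw [← Equiv.image_eq_preimage_symm]
      rfl
    rw [himg]
    exact hSclosed C hC
  have hcoordcont : Continuous coordFn := by
    apply Continuous.prodMk
    · exact continuous_pi fun x =>
        (ContinuousLinearMap.apply ℝ ℝ ((Pi.single x 1 : V → ℝ), (0:V → ℝ))).continuous
    · exact continuous_pi fun x =>
        (ContinuousLinearMap.apply ℝ ℝ ((0:V → ℝ), (Pi.single x 1 : V → ℝ))).continuous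
  set Tinv : (((V → ℝ) × (V → ℝ)) →L[ℝ] ℝ) → ((V → ℝ) × (V → ℝ)) :=
    fun f => eS.symm (coordFn f) with hTinvdef
  have hleft : Function.LeftInverse Tinv T := by
    intro z
    show eS.symm (coordFn (T z)) = z
    have : coordFn (T z) = eS z := rfl
    rw [this, Equiv.symm_apply_apply]
  exact ⟨T, hformula, ⟨hinj, hsurj⟩, Tinv, hleft,
    hleft.rightInverse_of_surjective hsurj,
    heScont.comp hcoordcont⟩
end

section
/- (Uniform monotonicity, inequalities (3.8)–(3.9)) Let p≥2. There exists a constant c_p>0, depending only on p, such that for every finite graph G=(V,E), every integer m≥1, every h:V→(0,∞), and all functions u1,u2:V→ℝ, one has B_{m,p}(u1,u1−u2) − B_{m,p}(u2,u1−u2) + ∫_V h·(|u1|^{p−2}u1 − |u2|^{p−2}u2)·(u1−u2) dμ ≥ c_p·‖u1−u2‖_{W^{m,p}}^p. -/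
open Real

section Aux

lemma pow_split' (p x : ℝ) (hp : 2 ≤ p) (hx : 0 ≤ x) : x ^ p = x ^ (p - 2) * x ^ 2 := by
  rcases hx.eq_or_lt with h | h
  · rw [← h, Real.zero_rpow (by linarith), sq, mul_zero, mul_zero]
  · rw [← Real.rpow_natCast x 2]
    push_cast
    rw [← Real.rpow_add h]
    ring_nf

lemma key' (p s t r i : ℝ) (hp : 2 ≤ p) (hs : 0 ≤ s) (ht : 0 ≤ t) (hr : 0 ≤ r)
    (hr2 : r ^ 2 = s ^ 2 + t ^ 2 - 2 * i) (hrst : r ≤ s + t) :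
    2 ^ (1 - p) * r ^ p ≤ s ^ p + t ^ p - (s ^ (p - 2) + t ^ (p - 2)) * i := by
  have hi : i = (s ^ 2 + t ^ 2 - r ^ 2) / 2 := by linarith
  rw [pow_split' p s hp hs, pow_split' p t hp ht, pow_split' p r hp hr, hi]
  have h1 : 0 ≤ (s ^ (p - 2) - t ^ (p - 2)) * (s ^ 2 - t ^ 2) := by
    rcases le_total s t with hst | hst
    · have h2 := Real.rpow_le_rpow hs hst (by linarith : (0:ℝ) ≤ p - 2)
      have h3 : s ^ 2 ≤ t ^ 2 := by nlinarith
      nlinarith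
    · have h2 := Real.rpow_le_rpow ht hst (by linarith : (0:ℝ) ≤ p - 2)
      have h3 : t ^ 2 ≤ s ^ 2 := by nlinarith
      nlinarith
  have h2 : r ^ (p - 2) ≤ 2 ^ (p - 2) * (s ^ (p - 2) + t ^ (p - 2)) := by
    have hmax : r ≤ 2 * max s t := by
      rcases le_total s t with hst | hst
      · rw [max_eq_right hst]; linarith
      · rw [max_eq_left hst]; linarith
    calc r ^ (p - 2) ≤ (2 * max s t) ^ (p - 2) :=
          Real.rpow_le_rpow hr hmax (by linarith)
      _ = 2 ^ (p - 2) * (max s t) ^ (p - 2) :=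
          Real.mul_rpow (by norm_num) (le_trans hs (le_max_left s t))
      _ ≤ 2 ^ (p - 2) * (s ^ (p - 2) + t ^ (p - 2)) := by
          have hpos : (0:ℝ) ≤ 2 ^ (p - 2) := (Real.rpow_pos_of_pos two_pos _).le
          apply mul_le_mul_of_nonneg_left _ hpos
          rcases le_total s t with hst | hst
          · rw [max_eq_right hst]
            have := Real.rpow_nonneg hs (p - 2); linarith
          · rw [max_eq_left hst]
            have := Real.rpow_nonneg ht (p - 2); linarith
  have h3 : (2:ℝ) ^ (1 - p) * 2 ^ (p - 2) = 1 / 2 := by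
    rw [← Real.rpow_add (by norm_num : (0:ℝ) < 2)]
    rw [show (1:ℝ) - p + (p - 2) = -1 by ring, Real.rpow_neg_one]
    norm_num
  have h4 : 2 ^ (1 - p) * (r ^ (p - 2) * r ^ 2) ≤ (s ^ (p - 2) + t ^ (p - 2)) * r ^ 2 / 2 := by
    have h5 : r ^ (p - 2) * r ^ 2 ≤ (2 ^ (p - 2) * (s ^ (p - 2) + t ^ (p - 2))) * r ^ 2 :=
      mul_le_mul_of_nonneg_right h2 (sq_nonneg r)
    have h6 : 2 ^ (1 - p) * (r ^ (p - 2) * r ^ 2) ≤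
        2 ^ (1 - p) * ((2 ^ (p - 2) * (s ^ (p - 2) + t ^ (p - 2))) * r ^ 2) :=
      mul_le_mul_of_nonneg_left h5 (Real.rpow_pos_of_pos two_pos _).le
    calc 2 ^ (1 - p) * (r ^ (p - 2) * r ^ 2)
        ≤ 2 ^ (1 - p) * ((2 ^ (p - 2) * (s ^ (p - 2) + t ^ (p - 2))) * r ^ 2) := h6
      _ = (2 ^ (1 - p) * 2 ^ (p - 2)) * ((s ^ (p - 2) + t ^ (p - 2)) * r ^ 2) := by ring
      _ = (s ^ (p - 2) + t ^ (p - 2)) * r ^ 2 / 2 := by rw [h3]; ring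
  nlinarith [h1, h4]

lemma simon' {E : Type*} [NormedAddCommGroup E] [InnerProductSpace ℝ E]
    (p : ℝ) (hp : 2 ≤ p) (a b : E) :
    2 ^ (1 - p) * ‖a - b‖ ^ p ≤
      ‖a‖ ^ (p - 2) * (inner ℝ a (a - b) : ℝ) - ‖b‖ ^ (p - 2) * (inner ℝ b (a - b) : ℝ) := by
  have hr2 : ‖a - b‖ ^ 2 = ‖a‖ ^ 2 + ‖b‖ ^ 2 - 2 * (inner ℝ a b : ℝ) := by
    rw [norm_sub_sq_real]; ring
  have h := key' p ‖a‖ ‖b‖ ‖a - b‖ (inner ℝ a b) hp (norm_nonneg _) (norm_nonneg _)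
    (norm_nonneg _) hr2 (norm_sub_le a b)
  have ha : (inner ℝ a (a - b) : ℝ) = ‖a‖ ^ 2 - inner ℝ a b := by
    rw [inner_sub_right, real_inner_self_eq_norm_sq]
  have hb : (inner ℝ b (a - b) : ℝ) = inner ℝ a b - ‖b‖ ^ 2 := by
    rw [inner_sub_right, real_inner_self_eq_norm_sq, real_inner_comm]
  rw [ha, hb]
  rw [pow_split' p ‖a‖ hp (norm_nonneg _), pow_split' p ‖b‖ hp (norm_nonneg _)] at h
  nlinarith [h]

lemma simon_real' (p : ℝ) (hp : 2 ≤ p) (a b : ℝ) :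
    2 ^ (1 - p) * |a - b| ^ p ≤
      |a| ^ (p - 2) * a * (a - b) - |b| ^ (p - 2) * b * (a - b) := by
  have h := simon' p hp a b
  simp only [Real.norm_eq_abs, RCLike.inner_apply, starRingEnd_apply, star_trivial] at h
  nlinarith [h]

variable {V : Type*}

lemma glap_sub' [Fintype V] (w : V → V → ℝ) (μ : V → ℝ) (u v : V → ℝ) :
    glap w μ (u - v) = glap w μ u - glap w μ v := by
  funext x
  simp only [glap, Pi.sub_apply, ← mul_sub, ← Finset.sum_sub_distrib]
  congr 1
  apply Finset.sum_congr rfl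
  intros; ring

lemma glap_iter_sub' [Fintype V] (w : V → V → ℝ) (μ : V → ℝ) (k : ℕ) (u v : V → ℝ) :
    (glap w μ)^[k] (u - v) = (glap w μ)^[k] u - (glap w μ)^[k] v := by
  induction k with
  | zero => simp
  | succ n ih =>
      rw [Function.iterate_succ_apply', Function.iterate_succ_apply',
        Function.iterate_succ_apply', ih, glap_sub']

lemma ggam_eq_inner' [Fintype V] (w : V → V → ℝ) (μ : V → ℝ) (hw : ∀ x y, 0 ≤ w x y)
    (hμ : ∀ x, 0 < μ x) (f g : V → ℝ) (x : V) :
    ggam w μ f g x = ∑ y, (Real.sqrt (w x y / (2 * μ x)) * (f y - f x)) *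
      (Real.sqrt (w x y / (2 * μ x)) * (g y - g x)) := by
  unfold ggam
  rw [Finset.mul_sum]
  refine Finset.sum_congr rfl fun y _ => ?_
  have hc : Real.sqrt (w x y / (2 * μ x)) * Real.sqrt (w x y / (2 * μ x)) = w x y / (2 * μ x) :=
    Real.mul_self_sqrt (div_nonneg (hw x y) (by have := hμ x; positivity))
  rw [show (Real.sqrt (w x y / (2 * μ x)) * (f y - f x)) *
      (Real.sqrt (w x y / (2 * μ x)) * (g y - g x)) =
      (Real.sqrt (w x y / (2 * μ x)) * Real.sqrt (w x y / (2 * μ x))) *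
      ((f y - f x) * (g y - g x)) by ring, hc]
  ring

lemma pointwise_odd' [Fintype V] (w : V → V → ℝ) (μ : V → ℝ) (hw : ∀ x y, 0 ≤ w x y)
    (hμ : ∀ x, 0 < μ x) (p : ℝ) (hp : 2 ≤ p) (f1 f2 : V → ℝ) (x : V) :
    2 ^ (1 - p) * gnorm w μ (f1 - f2) x ^ p ≤
      gnorm w μ f1 x ^ (p - 2) * ggam w μ f1 (f1 - f2) x -
        gnorm w μ f2 x ^ (p - 2) * ggam w μ f2 (f1 - f2) x := by
  classical
  set Φ : (V → ℝ) → EuclideanSpace ℝ V :=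
    fun f => WithLp.toLp 2 (fun y => Real.sqrt (w x y / (2 * μ x)) * (f y - f x)) with hΦ
  have hinner : ∀ f g : V → ℝ, ggam w μ f g x = (inner ℝ (Φ f) (Φ g) : ℝ) := by
    intro f g
    rw [ggam_eq_inner' w μ hw hμ f g x]
    simp [PiLp.inner_apply, RCLike.inner_apply, Φ]
    exact Finset.sum_congr rfl fun y _ => by ring
  have hnorm : ∀ f : V → ℝ, gnorm w μ f x = ‖Φ f‖ := by
    intro f
    rw [gnorm, hinner, real_inner_self_eq_norm_sq, Real.sqrt_sq (norm_nonneg _)]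
  have hsub : Φ (f1 - f2) = Φ f1 - Φ f2 := by
    ext y
    show Real.sqrt (w x y / (2 * μ x)) * ((f1 y - f2 y) - (f1 x - f2 x)) =
      Real.sqrt (w x y / (2 * μ x)) * (f1 y - f1 x) -
      Real.sqrt (w x y / (2 * μ x)) * (f2 y - f2 x)
    ring
  rw [hnorm, hnorm, hnorm, hinner, hinner, hsub]
  exact simon' p hp (Φ f1) (Φ f2)

end Aux

/-- Uniform monotonicity (inequalities (3.8)–(3.9)): for `p ≥ 2` there is `c_p > 0`,
depending only on `p`, such that for every finite graph, every `m ≥ 1`, every weight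
`h : V → (0,∞)` and all `u1, u2 : V → ℝ`,
`B_{m,p}(u1,u1−u2) − B_{m,p}(u2,u1−u2) + ∫_V h·(|u1|^{p−2}u1 − |u2|^{p−2}u2)·(u1−u2) dμ
  ≥ c_p·‖u1−u2‖_{W^{m,p}}^p`. -/
theorem stmt9 (p : ℝ) (hp : 2 ≤ p) :
    ∃ c : ℝ, 0 < c ∧
      ∀ (V : Type) [Fintype V] [Nonempty V] (w : V → V → ℝ) (μ : V → ℝ),
        (∀ x y, w x y = w y x) → (∀ x y, 0 ≤ w x y) → (∀ x, w x x = 0) →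
        (∀ x, 0 < μ x) →
        ∀ (m : ℕ), 1 ≤ m → ∀ (h : V → ℝ), (∀ x, 0 < h x) →
        ∀ u1 u2 : V → ℝ,
          c * wnorm w μ h m p (u1 - u2) ^ p ≤
            Bmp w μ m p u1 (u1 - u2) - Bmp w μ m p u2 (u1 - u2) +
              intV μ (fun x =>
                h x * (|u1 x| ^ (p - 2) * u1 x - |u2 x| ^ (p - 2) * u2 x) *
                  (u1 x - u2 x)) := by
  refine ⟨2 ^ (1 - p), Real.rpow_pos_of_pos two_pos _, ?_⟩
  intro V _ _ w μ hsym hw hww hμ m hm h hh u1 u2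
  have hp0 : p ≠ 0 := by positivity
  -- rewrite the wnorm power as the plain integral
  have hgradm_nonneg : ∀ x, 0 ≤ gradm w μ m (u1 - u2) x := by
    intro x; unfold gradm; split
    · exact Real.sqrt_nonneg _
    · exact abs_nonneg _
  set G : V → ℝ := fun x => gradm w μ m (u1 - u2) x ^ p + h x * |(u1 - u2) x| ^ p with hG
  have hGnn : ∀ x, 0 ≤ G x := fun x =>
    add_nonneg (Real.rpow_nonneg (hgradm_nonneg x) p)
      (mul_nonneg (hh x).le (Real.rpow_nonneg (abs_nonneg _) p))
  have hS : 0 ≤ intV μ G :=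
    Finset.sum_nonneg fun x _ => mul_nonneg (hμ x).le (hGnn x)
  have hwn : wnorm w μ h m p (u1 - u2) ^ p = intV μ G := by
    rw [wnorm, ← Real.rpow_mul hS, one_div_mul_cancel hp0, Real.rpow_one]
  rw [hwn]
  -- the h-part pointwise estimate
  have hterm : ∀ x : V, 2 ^ (1 - p) * (h x * |(u1 - u2) x| ^ p) ≤
      h x * (|u1 x| ^ (p - 2) * u1 x - |u2 x| ^ (p - 2) * u2 x) * (u1 x - u2 x) := by
    intro x
    have := mul_le_mul_of_nonneg_left (simon_real' p hp (u1 x) (u2 x)) (hh x).le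
    simp only [Pi.sub_apply]
    nlinarith [this]
  rcases Nat.mod_two_eq_zero_or_one m with hm2 | hm2
  · -- even case
    have hne : ¬ (m % 2 = 1) := by omega
    simp only [Bmp, if_neg hne, intV]
    rw [← Finset.sum_sub_distrib, ← Finset.sum_add_distrib, Finset.mul_sum]
    apply Finset.sum_le_sum
    intro x _
    have hgr : ∀ u : V → ℝ, gradm w μ m u x = |(glap w μ)^[m / 2] u x| := by
      intro u; rw [gradm, if_neg hne]
    have hglap : (glap w μ)^[m / 2] (u1 - u2) x =
        (glap w μ)^[m / 2] u1 x - (glap w μ)^[m / 2] u2 x := by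
      rw [glap_iter_sub']; rfl
    have hsim := simon_real' p hp ((glap w μ)^[m / 2] u1 x) ((glap w μ)^[m / 2] u2 x)
    have hpt : 2 ^ (1 - p) * G x ≤
        (gradm w μ m u1 x ^ (p - 2) * ((glap w μ)^[m / 2] u1 x) *
            ((glap w μ)^[m / 2] (u1 - u2) x) -
          gradm w μ m u2 x ^ (p - 2) * ((glap w μ)^[m / 2] u2 x) *
            ((glap w μ)^[m / 2] (u1 - u2) x)) +
        h x * (|u1 x| ^ (p - 2) * u1 x - |u2 x| ^ (p - 2) * u2 x) * (u1 x - u2 x) := by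
      have hht := hterm x
      simp only [hG, hgr, hglap]
      nlinarith [hsim, hht]
    have := mul_le_mul_of_nonneg_left hpt (hμ x).le
    nlinarith [this]
  · -- odd case
    simp only [Bmp, if_pos hm2, intV]
    rw [← Finset.sum_sub_distrib, ← Finset.sum_add_distrib, Finset.mul_sum]
    apply Finset.sum_le_sum
    intro x _
    have hgr : ∀ u : V → ℝ, gradm w μ m u x = gnorm w μ ((glap w μ)^[(m - 1) / 2] u) x := by
      intro u; rw [gradm, if_pos hm2]
    have hglap : (glap w μ)^[(m - 1) / 2] (u1 - u2) =
        (glap w μ)^[(m - 1) / 2] u1 - (glap w μ)^[(m - 1) / 2] u2 :=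
      glap_iter_sub' w μ _ u1 u2
    have hsim := pointwise_odd' w μ hw hμ p hp
      ((glap w μ)^[(m - 1) / 2] u1) ((glap w μ)^[(m - 1) / 2] u2) x
    have hpt : 2 ^ (1 - p) * G x ≤
        (gradm w μ m u1 x ^ (p - 2) *
            ggam w μ ((glap w μ)^[(m - 1) / 2] u1) ((glap w μ)^[(m - 1) / 2] (u1 - u2)) x -
          gradm w μ m u2 x ^ (p - 2) *
            ggam w μ ((glap w μ)^[(m - 1) / 2] u2) ((glap w μ)^[(m - 1) / 2] (u1 - u2)) x) +
        h x * (|u1 x| ^ (p - 2) * u1 x - |u2 x| ^ (p - 2) * u2 x) * (u1 x - u2 x) := by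
      have hht := hterm x
      simp only [hG, hgr, hglap]
      nlinarith [hsim, hht]
    have := mul_le_mul_of_nonneg_left hpt (hμ x).le
    nlinarith [this]
end

section
/- (Combined four-case inequality of Lemma 3.4) Let p ≥ q > 1 be real numbers and c_p, c_q > 0. Then for all real a,b ≥ 0: c_p·a^p + c_q·b^q ≥ (min{c_p,c_q}/2^{p−1})·min((a+b)^p, (a+b)^q); equivalently, c_p·a^p + c_q·b^q ≥ (min{c_p,c_q}/2^{p−1})·(a+b)^p when a+b ≤ 1 and c_p·a^p + c_q·b^q ≥ (min{c_p,c_q}/2^{p−1})·(a+b)^q when a+b > 1. -/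
open Real

/-- `x·log x ≥ -1/e ≥ -log 2` for `0 < x ≤ 1`, weak form. -/
lemma aux_xlogx (x : ℝ) (hx0 : 0 < x) (hx1 : x ≤ 1) : 0 ≤ Real.log 2 + x * Real.log x := by
  set y : ℝ := -Real.log x with hy
  have hy0 : 0 ≤ y := by
    have := Real.log_nonpos hx0.le hx1
    simp [hy]; linarith
  have hxe : x = Real.exp (-y) := by
    rw [hy, neg_neg, Real.exp_log hx0]
  have h1 : y ≤ Real.exp (y - 1) := by
    have := Real.add_one_le_exp (y - 1)
    linarith
  have h2 : y * Real.exp (-y) ≤ Real.exp (-1 : ℝ) := by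
    calc y * Real.exp (-y) ≤ Real.exp (y - 1) * Real.exp (-y) := by
          apply mul_le_mul_of_nonneg_right h1 (Real.exp_pos _).le
      _ = Real.exp (-1 : ℝ) := by rw [← Real.exp_add]; ring_nf
  have h3 : Real.exp (-1 : ℝ) ≤ Real.log 2 := by
    have he : (2.7182818283 : ℝ) < Real.exp 1 := Real.exp_one_gt_d9
    have hl : (0.6931471803 : ℝ) < Real.log 2 := Real.log_two_gt_d9
    have : Real.exp (-1 : ℝ) = (Real.exp 1)⁻¹ := by
      rw [Real.exp_neg]
    rw [this]
    have h4 : (Real.exp 1)⁻¹ ≤ (2.7182818283 : ℝ)⁻¹ := by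
      apply inv_anti₀ (by norm_num) he.le
    have : (2.7182818283 : ℝ)⁻¹ ≤ 0.6931471803 := by norm_num
    linarith
  have : x * Real.log x = -(y * Real.exp (-y)) := by
    rw [neg_neg, Real.exp_log hx0]; ring
  rw [this]
  linarith

/-- Key elementary inequality: `x + 1 ≤ 2^t + x^(1+t)` for `0 < x ≤ 1`, `0 ≤ t`. -/
lemma aux_key (x t : ℝ) (hx0 : 0 < x) (hx1 : x ≤ 1) (ht : 0 ≤ t) :
    x + 1 ≤ (2 : ℝ) ^ t + x ^ (1 + t) := by
  have h2 : (1 : ℝ) + t * Real.log 2 ≤ (2 : ℝ) ^ t := by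
    rw [Real.rpow_def_of_pos (by norm_num : (0:ℝ) < 2)]
    have := Real.add_one_le_exp (Real.log 2 * t)
    nlinarith [this]
  have hxt : (1 : ℝ) + t * Real.log x ≤ x ^ t := by
    rw [Real.rpow_def_of_pos hx0]
    have := Real.add_one_le_exp (Real.log x * t)
    nlinarith [this]
  have hsplit : x ^ (1 + t) = x * x ^ t := by
    rw [Real.rpow_add hx0, Real.rpow_one]
  have hx' : x * (1 + t * Real.log x) ≤ x * x ^ t :=
    mul_le_mul_of_nonneg_left hxt hx0.le
  have hlog := aux_xlogx x hx0 hx1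
  rw [hsplit]
  nlinarith [mul_nonneg ht hlog]

/-- Real version of the two-point power mean inequality. -/
lemma aux_convex (a b r : ℝ) (ha : 0 ≤ a) (hb : 0 ≤ b) (hr : 1 ≤ r) :
    (a + b) ^ r ≤ (2 : ℝ) ^ (r - 1) * (a ^ r + b ^ r) := by
  lift a to NNReal using ha
  lift b to NNReal using hb
  have := NNReal.rpow_add_le_mul_rpow_add_rpow a b hr
  have h2 : ((2 : NNReal) : ℝ) = (2 : ℝ) := by norm_num
  calc ((a : ℝ) + b) ^ r = (((a + b : NNReal) : ℝ)) ^ r := by push_cast; ring_nf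
    _ = (((a + b) ^ r : NNReal) : ℝ) := by rw [NNReal.coe_rpow]
    _ ≤ (((2 : NNReal) ^ (r - 1) * (a ^ r + b ^ r) : NNReal) : ℝ) := by exact_mod_cast this
    _ = (2 : ℝ) ^ (r - 1) * ((a : ℝ) ^ r + (b : ℝ) ^ r) := by
        push_cast [NNReal.coe_rpow, h2]; ring

/-- Key lemma B: for `a + b ≥ 1`, `1 ≤ q ≤ p`:
`2^(q-1)(a^q + b^q) ≤ 2^(p-1)(a^p + b^q)`. -/
lemma aux_B (p q a b : ℝ) (hq : 1 ≤ q) (hpq : q ≤ p) (ha : 0 ≤ a) (hb : 0 ≤ b)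
    (hs : 1 ≤ a + b) :
    (2 : ℝ) ^ (q - 1) * (a ^ q + b ^ q) ≤ (2 : ℝ) ^ (p - 1) * (a ^ p + b ^ q) := by
  have h2q : (0 : ℝ) < (2 : ℝ) ^ q := Real.rpow_pos_of_pos (by norm_num) q
  have h2p : (0 : ℝ) < (2 : ℝ) ^ p := Real.rpow_pos_of_pos (by norm_num) p
  have hbq : 0 ≤ b ^ q := Real.rpow_nonneg hb q
  have hap : 0 ≤ a ^ p := Real.rpow_nonneg ha p
  have haq : 0 ≤ a ^ q := Real.rpow_nonneg ha q
  -- reduce to: 2^q * a^q + 2^q * b^q ≤ 2^p * a^p + 2^p * b^q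
  have main : (2:ℝ) ^ q * a ^ q + (2:ℝ) ^ q * b ^ q ≤ (2:ℝ) ^ p * a ^ p + (2:ℝ) ^ p * b ^ q := by
    have h2qb : (2:ℝ) ^ q * b ^ q ≤ (2:ℝ) ^ p * b ^ q := by
      apply mul_le_mul_of_nonneg_right _ hbq
      exact Real.rpow_le_rpow_of_exponent_le (by norm_num) hpq
    have hma : (2:ℝ) ^ q * a ^ q = (2 * a) ^ q := by
      rw [Real.mul_rpow (by norm_num) ha]
    have hmap : (2:ℝ) ^ p * a ^ p = (2 * a) ^ p := by
      rw [Real.mul_rpow (by norm_num) ha]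
    by_cases hca : 1 ≤ 2 * a
    · -- (2a)^q ≤ (2a)^p
      have := Real.rpow_le_rpow_of_exponent_le hca hpq
      rw [hma, hmap]; linarith
    · push_neg at hca
      rcases eq_or_lt_of_le ha with rfl | ha0
      · simp only [mul_zero] at hma hmap ⊢
        have hz : (0:ℝ) ^ q = 0 := Real.zero_rpow (by linarith)
        have hz' : (0:ℝ) ^ p = 0 := Real.zero_rpow (by linarith)
        rw [hz, hz']
        linarith
      · -- 0 < 2a < 1 case; use aux_key with x = 2a, t = p - q
        set x : ℝ := 2 * a with hx
        have hx0 : 0 < x := by positivity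
        have hx1 : x ≤ 1 := hca.le
        set t : ℝ := p - q with htdef
        have ht : 0 ≤ t := by simp [htdef]; linarith
        have hkey := aux_key x t hx0 hx1 ht
        -- x - x * x^t ≤ 2^t - 1
        have hxq : x ^ q ≤ x := by
          calc x ^ q ≤ x ^ (1:ℝ) := Real.rpow_le_rpow_of_exponent_ge hx0 hx1 hq
            _ = x := Real.rpow_one x
        have hxt1 : x ^ t ≤ 1 := Real.rpow_le_one hx0.le hx1 ht
        have hxqt : x ^ p = x ^ q * x ^ t := by
          rw [← Real.rpow_add hx0]; congr 1; simp [htdef]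
        have hxx : x ^ (1 + t) = x * x ^ t := by
          rw [Real.rpow_add hx0, Real.rpow_one]
        -- x^q - x^p = x^q (1 - x^t) ≤ x (1 - x^t) ≤ 2^t - 1
        have h1 : x ^ q - x ^ p ≤ (2:ℝ) ^ t - 1 := by
          have hA : x ^ q * (1 - x ^ t) ≤ x * (1 - x ^ t) :=
            mul_le_mul_of_nonneg_right hxq (by linarith)
          have hB : x * (1 - x ^ t) ≤ (2:ℝ) ^ t - 1 := by
            rw [hxx] at hkey; nlinarith
          nlinarith [hxqt]
        -- (2b)^q ≥ 1 since 2b ≥ 2 - x ≥ 1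
        have h2b : (1:ℝ) ≤ (2 * b) ^ q := by
          apply Real.one_le_rpow _ (by linarith)
          linarith
        have h2bq : (2 * b) ^ q = (2:ℝ) ^ q * b ^ q := Real.mul_rpow (by norm_num) hb
        have h2t1 : (0:ℝ) ≤ (2:ℝ) ^ t - 1 := by
          have : (1:ℝ) ≤ (2:ℝ) ^ t := Real.one_le_rpow (by norm_num) ht
          linarith
        have h2 : x ^ q - x ^ p ≤ ((2:ℝ) ^ t - 1) * ((2:ℝ) ^ q * b ^ q) := by
          calc x ^ q - x ^ p ≤ (2:ℝ) ^ t - 1 := h1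
            _ = ((2:ℝ) ^ t - 1) * 1 := by ring
            _ ≤ ((2:ℝ) ^ t - 1) * ((2:ℝ) ^ q * b ^ q) := by
                apply mul_le_mul_of_nonneg_left _ h2t1
                rw [← h2bq]; exact h2b
        have h2t : (2:ℝ) ^ t * (2:ℝ) ^ q = (2:ℝ) ^ p := by
          rw [← Real.rpow_add (by norm_num : (0:ℝ) < 2)]; congr 1; simp [htdef]
        rw [hma, hmap]
        nlinarith [h2]
  -- divide by 2
  have e1 : (2:ℝ) ^ (q - 1) = (2:ℝ) ^ q / 2 := by
    rw [Real.rpow_sub (by norm_num : (0:ℝ) < 2), Real.rpow_one]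
  have e2 : (2:ℝ) ^ (p - 1) = (2:ℝ) ^ p / 2 := by
    rw [Real.rpow_sub (by norm_num : (0:ℝ) < 2), Real.rpow_one]
  rw [e1, e2]
  linarith

/-- Core inequality: `min((a+b)^p, (a+b)^q) ≤ 2^(p-1) (a^p + b^q)`. -/
lemma aux_core (p q a b : ℝ) (hq : 1 ≤ q) (hpq : q ≤ p) (ha : 0 ≤ a) (hb : 0 ≤ b) :
    min ((a + b) ^ p) ((a + b) ^ q) ≤ (2 : ℝ) ^ (p - 1) * (a ^ p + b ^ q) := by
  have hp : 1 ≤ p := le_trans hq hpq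
  by_cases hs : a + b ≤ 1
  · -- min ≤ (a+b)^p ≤ 2^{p-1}(a^p + b^p) ≤ 2^{p-1}(a^p + b^q)
    have h1 : (a + b) ^ p ≤ (2:ℝ) ^ (p - 1) * (a ^ p + b ^ p) := aux_convex a b p ha hb hp
    have hbpq : b ^ p ≤ b ^ q := by
      rcases eq_or_lt_of_le hb with rfl | hb0
      · rw [Real.zero_rpow (by linarith), Real.zero_rpow (by linarith)]
      · exact Real.rpow_le_rpow_of_exponent_ge hb0 (by linarith) hpq
    have h2p : (0 : ℝ) < (2 : ℝ) ^ (p - 1) := Real.rpow_pos_of_pos (by norm_num) _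
    calc min ((a + b) ^ p) ((a + b) ^ q) ≤ (a + b) ^ p := min_le_left _ _
      _ ≤ (2:ℝ) ^ (p - 1) * (a ^ p + b ^ p) := h1
      _ ≤ (2:ℝ) ^ (p - 1) * (a ^ p + b ^ q) := by nlinarith
  · push_neg at hs
    have h1 : (a + b) ^ q ≤ (2:ℝ) ^ (q - 1) * (a ^ q + b ^ q) := aux_convex a b q ha hb hq
    have h2 := aux_B p q a b hq hpq ha hb hs.le
    calc min ((a + b) ^ p) ((a + b) ^ q) ≤ (a + b) ^ q := min_le_right _ _
      _ ≤ (2:ℝ) ^ (q - 1) * (a ^ q + b ^ q) := h1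
      _ ≤ (2:ℝ) ^ (p - 1) * (a ^ p + b ^ q) := h2

/-- Combined four-case inequality of Lemma 3.4: for `p ≥ q > 1` and `c_p, c_q > 0`,
for all `a, b ≥ 0` one has
`c_p·a^p + c_q·b^q ≥ (min{c_p,c_q}/2^{p−1})·min((a+b)^p, (a+b)^q)`. -/
theorem stmt10 (p q : ℝ) (hq : 1 < q) (hpq : q ≤ p)
    (cp cq : ℝ) (hcp : 0 < cp) (hcq : 0 < cq)
    (a b : ℝ) (ha : 0 ≤ a) (hb : 0 ≤ b) :
    min cp cq / (2 : ℝ) ^ (p - 1) * min ((a + b) ^ p) ((a + b) ^ q) ≤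
      cp * a ^ p + cq * b ^ q := by
  have hcore := aux_core p q a b hq.le hpq ha hb
  have h2p : (0 : ℝ) < (2 : ℝ) ^ (p - 1) := Real.rpow_pos_of_pos (by norm_num) _
  have hm : 0 < min cp cq := lt_min hcp hcq
  have hap : 0 ≤ a ^ p := Real.rpow_nonneg ha p
  have hbq : 0 ≤ b ^ q := Real.rpow_nonneg hb q
  have hmin : (0:ℝ) ≤ min ((a + b) ^ p) ((a + b) ^ q) :=
    le_min (Real.rpow_nonneg (by linarith) p) (Real.rpow_nonneg (by linarith) q)
  calc min cp cq / (2 : ℝ) ^ (p - 1) * min ((a + b) ^ p) ((a + b) ^ q)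
      ≤ min cp cq / (2 : ℝ) ^ (p - 1) * ((2 : ℝ) ^ (p - 1) * (a ^ p + b ^ q)) := by
        apply mul_le_mul_of_nonneg_left hcore (by positivity)
    _ = min cp cq * (a ^ p + b ^ q) := by
        field_simp
    _ = min cp cq * a ^ p + min cp cq * b ^ q := by ring
    _ ≤ cp * a ^ p + cq * b ^ q := by
        gcongr
        · exact min_le_left _ _
        · exact min_le_right _ _
end
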